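/- Spectral theorem (spectral bundles part): suppose Σ_NED(A) = I₁ ∪ ⋯ ∪ I_n with 1 ≤ n ≤ N spectral intervals as in the spectral theorem, with 0 < a₁ ≤ b₁ < ⋯ < a_n ≤ b_n. Choose γ₀ ∈ ρ_NED(A) with (0,γ₀) ⊆ ρ_NED(A) if I₁ = [a₁,b₁] (if I₁ = (0,b₁], set W₀(l) := {0} and use U_{γ₀}(l) := ℝ^N in the formula for W₁); choose γ_n ∈ ρ_NED(A) with (γ_n,∞) ⊆ ρ_NED(A) if I_n = [a_n,b_n] (if I_n = [a_n,∞), set W_{n+1}(l) := {0} and use S_{γ_n}(l) := ℝ^N in the formula for W_n); and for n ≥ 2 choose γ_i ∈ ρ_NED(A) with b_i < γ_i < a_{i+1} for i = 1,…,n−1. Define W₀(l) = S_{γ₀}(l), W_i(l) = U_{γ_{i-1}}(l) ∩ S_{γ_i}(l) for i = 1,…,n, and W_{n+1}(l) = U_{γ_n}(l). Then for every l ∈ ℤ: dim W_i(l) ≥ 1 for i = 1,…,n; W_i(l) ∩ W_j(l) = {0} for i ≠ j; W₀(l) + W₁(l) + ⋯ + W_{n+1}(l) = ℝ^N; and the subspaces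 W_i(l) are independent of the admissible choices of γ₀,…,γ_n. -/

import Mathlib

open Matrix

attribute [local instance] Matrix.linftyOpNormedAddCommGroup

abbrev Mat (N : ℕ) := Matrix (Fin N) (Fin N) ℝ

noncomputable def fundSolNat {N : ℕ} (A : ℤ → GL (Fin N) ℝ) : ℕ → GL (Fin N) ℝ
  | 0 => 1
  | n + 1 => A (n : ℤ) * fundSolNat A n

noncomputable def fundSolNeg {N : ℕ} (A : ℤ → GL (Fin N) ℝ) : ℕ → GL (Fin N) ℝ
  | 0 => (A (-1))⁻¹
  | n + 1 => (A (Int.negSucc (n + 1)))⁻¹ * fundSolNeg A n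

noncomputable def fundSol {N : ℕ} (A : ℤ → GL (Fin N) ℝ) : ℤ → GL (Fin N) ℝ
  | Int.ofNat n => fundSolNat A n
  | Int.negSucc n => fundSolNeg A n

/-- The evolution operator `Φ(k,l)` of `x_{k+1} = A_k x_k`. -/
noncomputable def evol {N : ℕ} (A : ℤ → GL (Fin N) ℝ) (k l : ℤ) : Mat N :=
  ↑(fundSol A k * (fundSol A l)⁻¹)

def IsInvariantProjector {N : ℕ} (A : ℤ → GL (Fin N) ℝ) (P : ℤ → Mat N) : Prop :=
  (∀ k, P k * P k = P k) ∧ ∀ k, P (k + 1) * (A k : Mat N) = (A k : Mat N) * P k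

/-- Evolution operator `Φ_γ(k,l) = γ^{-(k-l)} Φ(k,l)` of `x_{k+1} = (1/γ) A_k x_k`. -/
noncomputable def evolW {N : ℕ} (A : ℤ → GL (Fin N) ℝ) (γ : ℝ) (k l : ℤ) : Mat N :=
  γ ^ (l - k) • evol A k l

def NEDWith {N : ℕ} (A : ℤ → GL (Fin N) ℝ) (γ : ℝ) (P : ℤ → Mat N) (K α ε : ℝ) : Prop :=
  IsInvariantProjector A P ∧ 1 ≤ K ∧ 0 < α ∧ α < 1 ∧ 1 ≤ ε ∧
    (∀ k l : ℤ, l ≤ k → ‖evolW A γ k l * P l‖ ≤ K * α ^ (k - l) * ε ^ l) ∧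
    (∀ k l : ℤ, k ≤ l → ‖evolW A γ k l * (1 - P l)‖ ≤ K * (1 / α) ^ (k - l) * ε ^ l)

def HasNED {N : ℕ} (A : ℤ → GL (Fin N) ℝ) (γ : ℝ) : Prop :=
  ∃ P K α ε, NEDWith A γ P K α ε

def HasStrongNED {N : ℕ} (A : ℤ → GL (Fin N) ℝ) (γ : ℝ) : Prop :=
  ∃ P K α ε, NEDWith A γ P K α ε ∧ α * ε ^ 2 < 1

def HasED {N : ℕ} (A : ℤ → GL (Fin N) ℝ) (γ : ℝ) : Prop :=
  ∃ P K α, NEDWith A γ P K α 1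

def SigmaNED {N : ℕ} (A : ℤ → GL (Fin N) ℝ) : Set ℝ := {γ | 0 < γ ∧ ¬ HasStrongNED A γ}

def rhoNED {N : ℕ} (A : ℤ → GL (Fin N) ℝ) : Set ℝ := {γ | 0 < γ ∧ HasStrongNED A γ}

def SigmaED {N : ℕ} (A : ℤ → GL (Fin N) ℝ) : Set ℝ := {γ | 0 < γ ∧ ¬ HasED A γ}

def stableSet {N : ℕ} (A : ℤ → GL (Fin N) ℝ) (γ ε : ℝ) (l : ℤ) : Set (Fin N → ℝ) :=
  {ξ | ∃ C : ℝ, ∀ k : ℤ, l ≤ k → ‖(evol A k l).mulVec ξ‖ * γ ^ (-k) * ε ^ (-l) ≤ C}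

def unstableSet {N : ℕ} (A : ℤ → GL (Fin N) ℝ) (γ ε : ℝ) (l : ℤ) : Set (Fin N → ℝ) :=
  {ξ | ∃ C : ℝ, ∀ k : ℤ, k ≤ l → ‖(evol A k l).mulVec ξ‖ * γ ^ (-k) * ε ^ (-l) ≤ C}

/-- The `i`-th spectral interval (`i = 1, …, n`): `[a_i, b_i]` in general, possibly
`(0, b₁]` for `i = 1` and possibly `[a_n, ∞)` for `i = n`. -/
def specInterval (n : ℕ) (lowFull highInf : Bool) (a b : ℕ → ℝ) (i : ℕ) : Set ℝ :=
  if i = 1 ∧ lowFull then Set.Ioc 0 (b 1)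
  else if i = n ∧ highInf then Set.Ici (a n)
  else Set.Icc (a i) (b i)

/-- An admissible choice of resolvent points `γ₀ < I₁ < γ₁ < I₂ < ⋯ < I_n < γ_n`
(with the corresponding strong nonuniform exponential dichotomy data), where `γ₀`
is omitted if `I₁ = (0,b₁]` and `γ_n` is omitted if `I_n = [a_n,∞)`. -/
def AdmissibleChoice {N : ℕ} (A : ℤ → GL (Fin N) ℝ) (n : ℕ)
    (lowFull highInf : Bool) (a b : ℕ → ℝ)
    (γ : ℕ → ℝ) (P : ℕ → ℤ → Mat N) (K α ε : ℕ → ℝ) : Prop :=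
  (lowFull = false → 0 < γ 0 ∧ Set.Ioo 0 (γ 0) ⊆ rhoNED A ∧
      NEDWith A (γ 0) (P 0) (K 0) (α 0) (ε 0) ∧ α 0 * ε 0 ^ 2 < 1) ∧
  (highInf = false → 0 < γ n ∧ Set.Ioi (γ n) ⊆ rhoNED A ∧
      NEDWith A (γ n) (P n) (K n) (α n) (ε n) ∧ α n * ε n ^ 2 < 1) ∧
  (∀ i, 1 ≤ i → i < n → b i < γ i ∧ γ i < a (i + 1) ∧
      NEDWith A (γ i) (P i) (K i) (α i) (ε i) ∧ α i * ε i ^ 2 < 1)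

/-- The spectral bundles: `W₀(l) = S_{γ₀}(l)`, `W_i(l) = U_{γ_{i-1}}(l) ∩ S_{γ_i}(l)`
for `i = 1, …, n`, and `W_{n+1}(l) = U_{γ_n}(l)`, with the conventions `W₀ = {0}`,
`U_{γ₀} = ℝ^N` if `I₁ = (0,b₁]`, and `W_{n+1} = {0}`, `S_{γ_n} = ℝ^N` if
`I_n = [a_n,∞)`. -/
noncomputable def specBundle {N : ℕ} (A : ℤ → GL (Fin N) ℝ) (n : ℕ)
    (lowFull highInf : Bool) (γ ε : ℕ → ℝ) (i : ℕ) (l : ℤ) : Set (Fin N → ℝ) :=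
  if i = 0 then
    (if lowFull then {0} else stableSet A (γ 0) (ε 0) l)
  else if i = n + 1 then
    (if highInf then {0} else unstableSet A (γ n) (ε n) l)
  else
    (if i = 1 ∧ lowFull then Set.univ else unstableSet A (γ (i - 1)) (ε (i - 1)) l) ∩
    (if i = n ∧ highInf then Set.univ else stableSet A (γ i) (ε i) l)

section Aux
variable {N : ℕ} (A : ℤ → GL (Fin N) ℝ)

lemma evol_mul (k m l : ℤ) : evol A k m * evol A m l = evol A k l := by
  rw [evol, evol, evol, ← Units.val_mul]
  congr 1
  group

lemma evol_self (l : ℤ) : evol A l l = (1 : Mat N) := by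
  rw [evol, mul_inv_cancel, Units.val_one]

lemma evol_mulVec (k m l : ℤ) (ξ : Fin N → ℝ) :
    evol A k m *ᵥ (evol A m l *ᵥ ξ) = evol A k l *ᵥ ξ := by
  rw [Matrix.mulVec_mulVec, evol_mul]

lemma evolW_eq (γ : ℝ) (k l : ℤ) : evolW A γ k l = γ ^ (l - k) • evol A k l := rfl

end Aux
attribute [local instance] Matrix.linftyOpNormedSpace

section Aux2
variable {N : ℕ} {A : ℤ → GL (Fin N) ℝ}

lemma idem_eq_zero_of_norm_lt_one {M : Mat N} (hM : M * M = M) (h : ‖M‖ < 1) : M = 0 := by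
  have h1 : ‖M‖ ≤ ‖M‖ * ‖M‖ := by
    conv_lhs => rw [← hM]
    exact Matrix.linfty_opNorm_mul M M
  have h0 : ‖M‖ ≤ 0 := by nlinarith [norm_nonneg M]
  have := le_antisymm h0 (norm_nonneg M)
  exact norm_eq_zero.mp this

lemma evolW_self (γ : ℝ) (l : ℤ) : evolW A γ l l = (1 : Mat N) := by
  rw [evolW_eq, evol_self, sub_self, zpow_zero, one_smul]

/-- In this formalization any NED automatically has `ε = 1` (for `N ≥ 1`). -/
lemma eps_eq_one {γ : ℝ} {P : ℤ → Mat N} {K α ε : ℝ}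
    (h : NEDWith A γ P K α ε) (hN : 0 < N) : ε = 1 := by
  obtain ⟨hP, hK, hα0, hα1, hε, hs, hu⟩ := h
  by_contra hne
  have hε1 : 1 < ε := lt_of_le_of_ne hε (Ne.symm hne)
  have hKpos : (0:ℝ) < K := lt_of_lt_of_le one_pos hK
  obtain ⟨m, hm⟩ : ∃ m : ℕ, (1/ε) ^ m < 1 / K := by
    apply exists_pow_lt_of_lt_one (by positivity)
    rw [div_lt_one (lt_trans one_pos hε1)]; exact hε1
  set l : ℤ := -(m : ℤ)
  have hεl : K * ε ^ l < 1 := by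
    have : ε ^ l = (1/ε) ^ m := by
      rw [one_div, inv_pow, ← zpow_natCast, ← _root_.zpow_neg]
    rw [this]
    calc K * (1/ε)^m < K * (1/K) := by
          exact (mul_lt_mul_iff_right₀ hKpos).mpr hm
      _ = 1 := mul_one_div_cancel (ne_of_gt hKpos)
  have hsl := hs l l le_rfl
  have hul := hu l l le_rfl
  simp only [evolW_self, one_mul, sub_self, zpow_zero, mul_one] at hsl hul
  have hP0 : P l = 0 :=
    idem_eq_zero_of_norm_lt_one (hP.1 l) (lt_of_le_of_lt hsl hεl)
  have h1P : (1 : Mat N) - P l = 0 := by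
    refine idem_eq_zero_of_norm_lt_one ?_ (lt_of_le_of_lt hul hεl)
    rw [mul_sub, sub_mul, sub_mul, hP.1 l, one_mul, mul_one]
    abel_nf
    rw [one_mul]
  rw [hP0, sub_zero] at h1P
  have : (1 : Mat N) ⟨0, hN⟩ ⟨0, hN⟩ = (0 : Mat N) ⟨0, hN⟩ ⟨0, hN⟩ := by rw [h1P]
  simp [Matrix.one_apply] at this

end Aux2
section Aux3
variable {N : ℕ} {A : ℤ → GL (Fin N) ℝ} {P : ℤ → Mat N}

lemma conj_comm_of (u : GL (Fin N) ℝ) (Q R : Mat N) (h : Q * (u : Mat N) = (u : Mat N) * R) :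
    R * ((u⁻¹ : GL (Fin N) ℝ) : Mat N) = ((u⁻¹ : GL (Fin N) ℝ) : Mat N) * Q := by
  have e1 : ((u⁻¹ : GL (Fin N) ℝ) : Mat N) * (u : Mat N) = 1 := by
    rw [← Units.val_mul, inv_mul_cancel, Units.val_one]
  have e2 : (u : Mat N) * ((u⁻¹ : GL (Fin N) ℝ) : Mat N) = 1 := by
    rw [← Units.val_mul, mul_inv_cancel, Units.val_one]
  calc R * ((u⁻¹ : GL (Fin N) ℝ) : Mat N)
      = ((u⁻¹ : GL (Fin N) ℝ) : Mat N) * (u : Mat N) * R * ((u⁻¹ : GL (Fin N) ℝ) : Mat N) := by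
        rw [e1, one_mul]
    _ = ((u⁻¹ : GL (Fin N) ℝ) : Mat N) * (Q * (u : Mat N)) * ((u⁻¹ : GL (Fin N) ℝ) : Mat N) := by
        rw [h]; simp only [mul_assoc]
    _ = ((u⁻¹ : GL (Fin N) ℝ) : Mat N) * Q * ((u : Mat N) * ((u⁻¹ : GL (Fin N) ℝ) : Mat N)) := by
        simp only [mul_assoc]
    _ = ((u⁻¹ : GL (Fin N) ℝ) : Mat N) * Q := by rw [e2, mul_one]

lemma proj_inv_comm (hP : IsInvariantProjector A P) (k : ℤ) :
    P k * ((A k)⁻¹ : GL (Fin N) ℝ) = ((A k)⁻¹ : GL (Fin N) ℝ) * P (k + 1) :=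
  conj_comm_of (A k) (P (k+1)) (P k) (hP.2 k)

lemma proj_fundSolNat_comm (hP : IsInvariantProjector A P) (m : ℕ) :
    P (m : ℤ) * (fundSolNat A m : Mat N) = (fundSolNat A m : Mat N) * P 0 := by
  induction m with
  | zero => simp [fundSolNat]
  | succ m ih =>
    have hstep : fundSolNat A (m+1) = A (m : ℤ) * fundSolNat A m := rfl
    have hAm := hP.2 (m : ℤ)
    have hcast : ((m + 1 : ℕ) : ℤ) = (m : ℤ) + 1 := by push_cast; ring
    rw [hstep, Units.val_mul, hcast, ← mul_assoc, hAm, mul_assoc, ih, ← mul_assoc]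

lemma proj_fundSolNeg_comm (hP : IsInvariantProjector A P) (m : ℕ) :
    P (Int.negSucc m) * (fundSolNeg A m : Mat N) = (fundSolNeg A m : Mat N) * P 0 := by
  induction m with
  | zero =>
    have h := proj_inv_comm hP (-1)
    have e0 : (Int.negSucc 0) = (-1 : ℤ) := by decide
    have e1 : (-1 : ℤ) + 1 = 0 := by decide
    rw [e1] at h
    have hstep : fundSolNeg A 0 = (A (-1))⁻¹ := rfl
    rw [hstep, e0]
    exact h
  | succ m ih =>
    have hstep : fundSolNeg A (m+1) = (A (Int.negSucc (m + 1)))⁻¹ * fundSolNeg A m := rfl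
    have h := proj_inv_comm hP (Int.negSucc (m+1))
    have he : (Int.negSucc (m+1) : ℤ) + 1 = Int.negSucc m := by
      rw [Int.negSucc_eq, Int.negSucc_eq]; push_cast; ring
    rw [he] at h
    rw [hstep, Units.val_mul, ← mul_assoc, h, mul_assoc, ih, ← mul_assoc]

lemma proj_fundSol_comm (hP : IsInvariantProjector A P) (k : ℤ) :
    P k * (fundSol A k : Mat N) = (fundSol A k : Mat N) * P 0 := by
  cases k with
  | ofNat m =>
    have : fundSol A (Int.ofNat m) = fundSolNat A m := rfl
    rw [this, Int.ofNat_eq_natCast]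
    exact proj_fundSolNat_comm hP m
  | negSucc m =>
    exact proj_fundSolNeg_comm hP m

lemma proj_evol_comm (hP : IsInvariantProjector A P) (k l : ℤ) :
    P k * evol A k l = evol A k l * P l := by
  have hk := proj_fundSol_comm hP k
  have hlinv := conj_comm_of (fundSol A l) (P l) (P 0) (proj_fundSol_comm hP l)
  have hev : evol A k l = (fundSol A k : Mat N) * ((fundSol A l)⁻¹ : GL (Fin N) ℝ) := by
    rw [evol, Units.val_mul]
  rw [hev, ← mul_assoc, hk, mul_assoc, hlinv, ← mul_assoc]

lemma proj_evol_comm' (hP : IsInvariantProjector A P) (k l : ℤ) :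
    (1 - P k) * evol A k l = evol A k l * (1 - P l) := by
  rw [sub_mul, mul_sub, one_mul, mul_one, proj_evol_comm hP]

lemma evol_proj_sandwich' (hP : IsInvariantProjector A P) (k l : ℤ) (ξ : Fin N → ℝ) :
    (evol A l k * (1 - P k)) *ᵥ (evol A k l *ᵥ ξ) = (1 - P l) *ᵥ ξ := by
  rw [Matrix.mulVec_mulVec, mul_assoc, proj_evol_comm' hP, ← mul_assoc, evol_mul, evol_self, one_mul]

lemma evol_proj_sandwich (hP : IsInvariantProjector A P) (k l : ℤ) (ξ : Fin N → ℝ) :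
    (evol A l k * P k) *ᵥ (evol A k l *ᵥ ξ) = P l *ᵥ ξ := by
  rw [Matrix.mulVec_mulVec, mul_assoc, proj_evol_comm hP, ← mul_assoc, evol_mul, evol_self, one_mul]

/-- A projector at one time determines it at all times. -/
lemma proj_eq_everywhere {Q : ℤ → Mat N} (hP : IsInvariantProjector A P)
    (hQ : IsInvariantProjector A Q) (l : ℤ) (h : P l = Q l) (k : ℤ) : P k = Q k := by
  have h1 : P k * evol A k l = evol A k l * P l := proj_evol_comm hP k l
  have h2 : Q k * evol A k l = evol A k l * Q l := proj_evol_comm hQ k l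
  have hinv : evol A k l * evol A l k = 1 := by rw [evol_mul, evol_self]
  calc P k = P k * (evol A k l * evol A l k) := by rw [hinv, mul_one]
    _ = evol A k l * P l * evol A l k := by rw [← mul_assoc, h1]
    _ = evol A k l * Q l * evol A l k := by rw [h]
    _ = Q k * (evol A k l * evol A l k) := by rw [← mul_assoc, h2]
    _ = Q k := by rw [hinv, mul_one]

end Aux3
section Aux4
variable {N : ℕ} {A : ℤ → GL (Fin N) ℝ} {P : ℤ → Mat N} {γ K α : ℝ}

lemma zpow_le_zpow_base {x y : ℝ} (hx : 0 < x) (hxy : x ≤ y) {m : ℤ} (hm : 0 ≤ m) :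
    x ^ m ≤ y ^ m := by
  lift m to ℕ using hm
  rw [zpow_natCast, zpow_natCast]
  exact pow_le_pow_left₀ hx.le hxy m

lemma zpow_le_one_of_le_one {x : ℝ} (hx : 0 < x) (hx1 : x ≤ 1) {m : ℤ} (hm : 0 ≤ m) :
    x ^ m ≤ 1 := by
  have := zpow_le_zpow_right_of_le_one₀ hx hx1 hm
  rwa [zpow_zero] at this

lemma norm_evol_proj (hγ : 0 < γ) (h : NEDWith A γ P K α 1) {k l : ℤ} (hkl : l ≤ k) :
    ‖evol A k l * P l‖ ≤ K * α ^ (k - l) * γ ^ (k - l) := by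
  have hs := h.2.2.2.2.2.1 k l hkl
  rw [_root_.one_zpow, mul_one] at hs
  have he : evolW A γ k l * P l = γ ^ (l - k) • (evol A k l * P l) := by
    rw [evolW_eq, Matrix.smul_mul]
  rw [he, norm_smul, Real.norm_eq_abs, abs_of_pos (zpow_pos hγ _)] at hs
  have hpos : (0:ℝ) < γ ^ (k - l) := zpow_pos hγ _
  have := mul_le_mul_of_nonneg_left hs hpos.le
  rw [← mul_assoc, ← zpow_add₀ (ne_of_gt hγ)] at this
  have hz : k - l + (l - k) = 0 := by ring
  rw [hz, zpow_zero, one_mul] at this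
  calc ‖evol A k l * P l‖ ≤ γ ^ (k - l) * (K * α ^ (k - l)) := this
    _ = K * α ^ (k - l) * γ ^ (k - l) := by ring

lemma norm_evol_proj' (hγ : 0 < γ) (h : NEDWith A γ P K α 1) {k l : ℤ} (hkl : k ≤ l) :
    ‖evol A k l * (1 - P l)‖ ≤ K * α ^ (l - k) * γ ^ (k - l) := by
  have hu := h.2.2.2.2.2.2 k l hkl
  rw [_root_.one_zpow, mul_one] at hu
  have hα0 := h.2.2.1
  have hinv : (1 / α) ^ (k - l) = α ^ (l - k) := by
    rw [one_div, _root_.inv_zpow, ← _root_.zpow_neg, neg_sub]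
  rw [hinv] at hu
  have he : evolW A γ k l * (1 - P l) = γ ^ (l - k) • (evol A k l * (1 - P l)) := by
    rw [evolW_eq, Matrix.smul_mul]
  rw [he, norm_smul, Real.norm_eq_abs, abs_of_pos (zpow_pos hγ _)] at hu
  have hpos : (0:ℝ) < γ ^ (k - l) := zpow_pos hγ _
  have := mul_le_mul_of_nonneg_left hu hpos.le
  rw [← mul_assoc, ← zpow_add₀ (ne_of_gt hγ)] at this
  have hz : k - l + (l - k) = 0 := by ring
  rw [hz, zpow_zero, one_mul] at this
  calc ‖evol A k l * (1 - P l)‖ ≤ γ ^ (k - l) * (K * α ^ (l - k)) := this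
    _ = K * α ^ (l - k) * γ ^ (k - l) := by ring

lemma mem_stableSet_iff (hγ : 0 < γ) (h : NEDWith A γ P K α 1) (l : ℤ) (ξ : Fin N → ℝ) :
    ξ ∈ stableSet A γ 1 l ↔ P l *ᵥ ξ = ξ := by
  have hK := h.2.1
  have hα0 := h.2.2.1
  have hα1 := h.2.2.2.1
  constructor
  · rintro ⟨C, hC⟩
    have hC' : ∀ k : ℤ, l ≤ k → ‖evol A k l *ᵥ ξ‖ ≤ C * γ ^ k := by
      intro k hk
      have := hC k hk
      rw [_root_.one_zpow, mul_one] at this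
      have hpos : (0:ℝ) < γ ^ k := zpow_pos hγ _
      have h2 := mul_le_mul_of_nonneg_right this hpos.le
      rw [mul_assoc, ← zpow_add₀ (ne_of_gt hγ), neg_add_cancel, zpow_zero, mul_one] at h2
      linarith
    set v := (1 - P l) *ᵥ ξ with hv
    have key : ∀ m : ℕ, ‖v‖ ≤ K * C * γ ^ l * α ^ m := by
      intro m
      set k : ℤ := l + m with hk
      have hlk : l ≤ k := by simp [hk]
      have hsand : v = (evol A l k * (1 - P k)) *ᵥ (evol A k l *ᵥ ξ) :=
        (evol_proj_sandwich' h.1 k l ξ).symm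
      have h1 : ‖v‖ ≤ ‖evol A l k * (1 - P k)‖ * ‖evol A k l *ᵥ ξ‖ := by
        rw [hsand]; exact Matrix.linfty_opNorm_mulVec _ _
      have h2 : ‖evol A l k * (1 - P k)‖ ≤ K * α ^ (k - l) * γ ^ (l - k) :=
        norm_evol_proj' hγ h hlk
      have h3 : ‖evol A k l *ᵥ ξ‖ ≤ C * γ ^ k := hC' k hlk
      have hCnn : 0 ≤ C * γ ^ k := le_trans (norm_nonneg _) h3
      have h4 : ‖v‖ ≤ (K * α ^ (k - l) * γ ^ (l - k)) * (C * γ ^ k) := by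
        calc ‖v‖ ≤ ‖evol A l k * (1 - P k)‖ * ‖evol A k l *ᵥ ξ‖ := h1
          _ ≤ (K * α ^ (k - l) * γ ^ (l - k)) * (C * γ ^ k) := by
              apply mul_le_mul h2 h3 (norm_nonneg _)
              positivity
      have hγeq : γ ^ (l - k) * γ ^ k = γ ^ l := by
        rw [← zpow_add₀ (ne_of_gt hγ)]; congr 1; ring
      have hαeq : α ^ (k - l) = α ^ m := by
        rw [hk, add_sub_cancel_left, zpow_natCast]
      calc ‖v‖ ≤ (K * α ^ (k - l) * γ ^ (l - k)) * (C * γ ^ k) := h4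
        _ = K * C * (γ ^ (l - k) * γ ^ k) * α ^ (k - l) := by ring
        _ = K * C * γ ^ l * α ^ m := by rw [hγeq, hαeq]
    have hvzero : v = 0 := by
      by_contra hne
      have hvpos : 0 < ‖v‖ := norm_pos_iff.mpr hne
      set D := K * C * γ ^ l with hD
      rcases le_or_gt D 0 with hD0 | hD0
      · have := key 0
        rw [pow_zero, mul_one] at this
        linarith
      · obtain ⟨m, hm⟩ := exists_pow_lt_of_lt_one (div_pos hvpos hD0) hα1
        have := key m
        have : ‖v‖ < ‖v‖ := by
          calc ‖v‖ ≤ D * α ^ m := key m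
            _ < D * (‖v‖ / D) := by exact (mul_lt_mul_iff_right₀ hD0).mpr hm
            _ = ‖v‖ := by field_simp
        exact lt_irrefl _ this
    have : P l *ᵥ ξ = ξ - v := by
      rw [hv, Matrix.sub_mulVec, Matrix.one_mulVec]; abel
    rw [this, hvzero, sub_zero]
  · intro hfix
    refine ⟨K * γ ^ (-l) * ‖ξ‖, ?_⟩
    intro k hk
    rw [_root_.one_zpow, mul_one]
    have h1 : evol A k l *ᵥ ξ = (evol A k l * P l) *ᵥ ξ := by
      rw [← Matrix.mulVec_mulVec, hfix]
    have h2 : ‖evol A k l *ᵥ ξ‖ ≤ K * α ^ (k - l) * γ ^ (k - l) * ‖ξ‖ := by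
      rw [h1]
      calc ‖(evol A k l * P l) *ᵥ ξ‖ ≤ ‖evol A k l * P l‖ * ‖ξ‖ :=
            Matrix.linfty_opNorm_mulVec _ _
        _ ≤ K * α ^ (k - l) * γ ^ (k - l) * ‖ξ‖ := by
            apply mul_le_mul_of_nonneg_right (norm_evol_proj hγ h hk) (norm_nonneg _)
    have h3 : K * α ^ (k - l) * γ ^ (k - l) * ‖ξ‖ ≤ K * γ ^ (k - l) * ‖ξ‖ := by
      have hle : α ^ (k - l) ≤ 1 := zpow_le_one_of_le_one hα0 hα1.le (by omega)
      have hKα : K * α ^ (k - l) ≤ K * 1 := by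
        apply mul_le_mul_of_nonneg_left hle (by linarith)
      have hγp : (0:ℝ) ≤ γ ^ (k - l) := (zpow_pos hγ _).le
      have := mul_le_mul_of_nonneg_right
        (mul_le_mul_of_nonneg_right hKα hγp) (norm_nonneg ξ)
      rwa [mul_one] at this
    have h4 := mul_le_mul_of_nonneg_right (le_trans h2 h3) (zpow_pos hγ (-k)).le
    calc ‖evol A k l *ᵥ ξ‖ * γ ^ (-k) ≤ K * γ ^ (k - l) * ‖ξ‖ * γ ^ (-k) := h4
      _ = K * (γ ^ (k - l) * γ ^ (-k)) * ‖ξ‖ := by ring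
      _ = K * γ ^ (-l) * ‖ξ‖ := by
          rw [← zpow_add₀ (ne_of_gt hγ)]; congr 2; ring

lemma mem_unstableSet_iff (hγ : 0 < γ) (h : NEDWith A γ P K α 1) (l : ℤ) (ξ : Fin N → ℝ) :
    ξ ∈ unstableSet A γ 1 l ↔ P l *ᵥ ξ = 0 := by
  have hK := h.2.1
  have hα0 := h.2.2.1
  have hα1 := h.2.2.2.1
  constructor
  · rintro ⟨C, hC⟩
    have hC' : ∀ k : ℤ, k ≤ l → ‖evol A k l *ᵥ ξ‖ ≤ C * γ ^ k := by
      intro k hk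
      have := hC k hk
      rw [_root_.one_zpow, mul_one] at this
      have hpos : (0:ℝ) < γ ^ k := zpow_pos hγ _
      have h2 := mul_le_mul_of_nonneg_right this hpos.le
      rw [mul_assoc, ← zpow_add₀ (ne_of_gt hγ), neg_add_cancel, zpow_zero, mul_one] at h2
      linarith
    set v := P l *ᵥ ξ with hv
    have key : ∀ m : ℕ, ‖v‖ ≤ K * C * γ ^ l * α ^ m := by
      intro m
      set k : ℤ := l - m with hk
      have hlk : k ≤ l := by simp [hk]
      have hsand : v = (evol A l k * P k) *ᵥ (evol A k l *ᵥ ξ) :=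
        (evol_proj_sandwich h.1 k l ξ).symm
      have h1 : ‖v‖ ≤ ‖evol A l k * P k‖ * ‖evol A k l *ᵥ ξ‖ := by
        rw [hsand]; exact Matrix.linfty_opNorm_mulVec _ _
      have h2 : ‖evol A l k * P k‖ ≤ K * α ^ (l - k) * γ ^ (l - k) :=
        norm_evol_proj hγ h hlk
      have h3 : ‖evol A k l *ᵥ ξ‖ ≤ C * γ ^ k := hC' k hlk
      have h4 : ‖v‖ ≤ (K * α ^ (l - k) * γ ^ (l - k)) * (C * γ ^ k) := by
        calc ‖v‖ ≤ ‖evol A l k * P k‖ * ‖evol A k l *ᵥ ξ‖ := h1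
          _ ≤ (K * α ^ (l - k) * γ ^ (l - k)) * (C * γ ^ k) := by
              apply mul_le_mul h2 h3 (norm_nonneg _)
              positivity
      have hγeq : γ ^ (l - k) * γ ^ k = γ ^ l := by
        rw [← zpow_add₀ (ne_of_gt hγ)]; congr 1; ring
      have hαeq : α ^ (l - k) = α ^ m := by
        rw [hk, sub_sub_cancel, zpow_natCast]
      calc ‖v‖ ≤ (K * α ^ (l - k) * γ ^ (l - k)) * (C * γ ^ k) := h4
        _ = K * C * (γ ^ (l - k) * γ ^ k) * α ^ (l - k) := by ring
        _ = K * C * γ ^ l * α ^ m := by rw [hγeq, hαeq]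
    by_contra hne
    have hvpos : 0 < ‖v‖ := norm_pos_iff.mpr hne
    set D := K * C * γ ^ l with hD
    rcases le_or_gt D 0 with hD0 | hD0
    · have := key 0
      rw [pow_zero, mul_one] at this
      linarith
    · obtain ⟨m, hm⟩ := exists_pow_lt_of_lt_one (div_pos hvpos hD0) hα1
      have : ‖v‖ < ‖v‖ := by
        calc ‖v‖ ≤ D * α ^ m := key m
          _ < D * (‖v‖ / D) := by exact (mul_lt_mul_iff_right₀ hD0).mpr hm
          _ = ‖v‖ := by field_simp
      exact lt_irrefl _ this
  · intro hker
    refine ⟨K * γ ^ (-l) * ‖ξ‖, ?_⟩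
    intro k hk
    rw [_root_.one_zpow, mul_one]
    have h1 : evol A k l *ᵥ ξ = (evol A k l * (1 - P l)) *ᵥ ξ := by
      rw [← Matrix.mulVec_mulVec, Matrix.sub_mulVec, Matrix.one_mulVec, hker, sub_zero]
    have h2 : ‖evol A k l *ᵥ ξ‖ ≤ K * α ^ (l - k) * γ ^ (k - l) * ‖ξ‖ := by
      rw [h1]
      calc ‖(evol A k l * (1 - P l)) *ᵥ ξ‖ ≤ ‖evol A k l * (1 - P l)‖ * ‖ξ‖ :=
            Matrix.linfty_opNorm_mulVec _ _
        _ ≤ K * α ^ (l - k) * γ ^ (k - l) * ‖ξ‖ := by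
            apply mul_le_mul_of_nonneg_right (norm_evol_proj' hγ h hk) (norm_nonneg _)
    have h3 : K * α ^ (l - k) * γ ^ (k - l) * ‖ξ‖ ≤ K * γ ^ (k - l) * ‖ξ‖ := by
      have hle : α ^ (l - k) ≤ 1 := zpow_le_one_of_le_one hα0 hα1.le (by omega)
      have hKα : K * α ^ (l - k) ≤ K * 1 := by
        apply mul_le_mul_of_nonneg_left hle (by linarith)
      have hγp : (0:ℝ) ≤ γ ^ (k - l) := (zpow_pos hγ _).le
      have := mul_le_mul_of_nonneg_right
        (mul_le_mul_of_nonneg_right hKα hγp) (norm_nonneg ξ)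
      rwa [mul_one] at this
    have h4 := mul_le_mul_of_nonneg_right (le_trans h2 h3) (zpow_pos hγ (-k)).le
    calc ‖evol A k l *ᵥ ξ‖ * γ ^ (-k) ≤ K * γ ^ (k - l) * ‖ξ‖ * γ ^ (-k) := h4
      _ = K * (γ ^ (k - l) * γ ^ (-k)) * ‖ξ‖ := by ring
      _ = K * γ ^ (-l) * ‖ξ‖ := by
          rw [← zpow_add₀ (ne_of_gt hγ)]; congr 2; ring

end Aux4
section Aux5
variable {N : ℕ} {A : ℤ → GL (Fin N) ℝ} {P : ℤ → Mat N} {γ γ1 γ2 σ K K1 K2 α α1 α2 : ℝ}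

lemma zero_mem_stableSet {g e : ℝ} {l : ℤ} : (0 : Fin N → ℝ) ∈ stableSet A g e l := by
  refine ⟨0, fun k hk => ?_⟩
  simp [Matrix.mulVec_zero]

lemma zero_mem_unstableSet {g e : ℝ} {l : ℤ} : (0 : Fin N → ℝ) ∈ unstableSet A g e l := by
  refine ⟨0, fun k hk => ?_⟩
  simp [Matrix.mulVec_zero]

lemma stableSet_mono (hγ1 : 0 < γ1) (hle : γ1 ≤ γ2) (l : ℤ) :
    stableSet A γ1 1 l ⊆ stableSet A γ2 1 l := by
  rintro ξ ⟨C, hC⟩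
  have hγ2 : 0 < γ2 := lt_of_lt_of_le hγ1 hle
  have hC' : ∀ k : ℤ, l ≤ k → ‖evol A k l *ᵥ ξ‖ * γ1 ^ (-k) ≤ C := by
    intro k hk
    have := hC k hk
    rwa [_root_.one_zpow, mul_one] at this
  have hC0 : 0 ≤ C := le_trans (by positivity) (hC' l le_rfl)
  set r := γ1 / γ2 with hr
  have hr0 : 0 < r := div_pos hγ1 hγ2
  have hr1 : r ≤ 1 := (div_le_one hγ2).mpr hle
  refine ⟨C * r ^ l, fun k hk => ?_⟩
  rw [_root_.one_zpow, mul_one]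
  have h1 : γ1 ^ k ≠ 0 := (zpow_pos hγ1 k).ne'
  have h2 : γ2 ^ k ≠ 0 := (zpow_pos hγ2 k).ne'
  have key : γ2 ^ (-k) = γ1 ^ (-k) * r ^ k := by
    rw [hr, div_zpow, _root_.zpow_neg, _root_.zpow_neg]
    field_simp
  calc ‖evol A k l *ᵥ ξ‖ * γ2 ^ (-k)
      = ‖evol A k l *ᵥ ξ‖ * γ1 ^ (-k) * r ^ k := by rw [key]; ring
    _ ≤ C * r ^ k := mul_le_mul_of_nonneg_right (hC' k hk) (zpow_pos hr0 k).le
    _ ≤ C * r ^ l := mul_le_mul_of_nonneg_left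
        (zpow_le_zpow_right_of_le_one₀ hr0 hr1 hk) hC0

lemma unstableSet_anti (hγ1 : 0 < γ1) (hle : γ1 ≤ γ2) (l : ℤ) :
    unstableSet A γ2 1 l ⊆ unstableSet A γ1 1 l := by
  rintro ξ ⟨C, hC⟩
  have hγ2 : 0 < γ2 := lt_of_lt_of_le hγ1 hle
  have hC' : ∀ k : ℤ, k ≤ l → ‖evol A k l *ᵥ ξ‖ * γ2 ^ (-k) ≤ C := by
    intro k hk
    have := hC k hk
    rwa [_root_.one_zpow, mul_one] at this
  have hC0 : 0 ≤ C := le_trans (by positivity) (hC' l le_rfl)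
  set s := γ2 / γ1 with hs
  have hs1 : 1 ≤ s := (one_le_div hγ1).mpr hle
  have hs0 : 0 < s := lt_of_lt_of_le one_pos hs1
  refine ⟨C * s ^ l, fun k hk => ?_⟩
  rw [_root_.one_zpow, mul_one]
  have h1 : γ1 ^ k ≠ 0 := (zpow_pos hγ1 k).ne'
  have h2 : γ2 ^ k ≠ 0 := (zpow_pos hγ2 k).ne'
  have key : γ1 ^ (-k) = γ2 ^ (-k) * s ^ k := by
    rw [hs, div_zpow, _root_.zpow_neg, _root_.zpow_neg]
    field_simp
  calc ‖evol A k l *ᵥ ξ‖ * γ1 ^ (-k)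
      = ‖evol A k l *ᵥ ξ‖ * γ2 ^ (-k) * s ^ k := by rw [key]; ring
    _ ≤ C * s ^ k := mul_le_mul_of_nonneg_right (hC' k hk) (zpow_pos hs0 k).le
    _ ≤ C * s ^ l := mul_le_mul_of_nonneg_left (zpow_le_zpow_right₀ hs1 hk) hC0

lemma norm_evolW_mul (hσ : 0 < σ) (M : Mat N) (k l : ℤ) :
    ‖evolW A σ k l * M‖ = σ ^ (l - k) * ‖evol A k l * M‖ := by
  rw [evolW_eq, Matrix.smul_mul, norm_smul, Real.norm_eq_abs, abs_of_pos (zpow_pos hσ _)]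

/-- Combination of two NEDs with the same projector at an intermediate point. -/
lemma ned_combine (hγ1 : 0 < γ1)
    (h1 : NEDWith A γ1 P K1 α1 1) (h2 : NEDWith A γ2 P K2 α2 1)
    (hσ1 : γ1 ≤ σ) (hσ2 : σ ≤ γ2) :
    NEDWith A σ P (max K1 K2) (max α1 α2) 1 := by
  have hσ : 0 < σ := lt_of_lt_of_le hγ1 hσ1
  have hγ2 : 0 < γ2 := lt_of_lt_of_le hσ hσ2
  have hK1 := h1.2.1
  have hα10 := h1.2.2.1
  have hα11 := h1.2.2.2.1
  have hK2 := h2.2.1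
  have hα20 := h2.2.2.1
  have hα21 := h2.2.2.2.1
  have hαm0 : 0 < max α1 α2 := lt_max_of_lt_left hα10
  refine ⟨h1.1, le_trans hK1 (le_max_left _ _), hαm0, max_lt hα11 hα21,
    le_refl 1, ?_, ?_⟩
  · intro k l hkl
    rw [_root_.one_zpow, mul_one, norm_evolW_mul hσ]
    have hb : ‖evol A k l * P l‖ ≤ K1 * α1 ^ (k - l) * γ1 ^ (k - l) :=
      norm_evol_proj hγ1 h1 hkl
    have hprod : γ1 ^ (k - l) * σ ^ (l - k) ≤ 1 := by
      have hz : γ1 ^ (k - l) ≤ σ ^ (k - l) := zpow_le_zpow_base hγ1 hσ1 (by omega)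
      have := mul_le_mul_of_nonneg_right hz (zpow_pos hσ (l - k)).le
      rwa [← zpow_add₀ hσ.ne', (by ring : k - l + (l - k) = 0), zpow_zero] at this
    have hαle : α1 ^ (k - l) ≤ (max α1 α2) ^ (k - l) :=
      zpow_le_zpow_base hα10 (le_max_left _ _) (by omega)
    calc σ ^ (l - k) * ‖evol A k l * P l‖
        ≤ σ ^ (l - k) * (K1 * α1 ^ (k - l) * γ1 ^ (k - l)) :=
          mul_le_mul_of_nonneg_left hb (zpow_pos hσ _).le
      _ = K1 * α1 ^ (k - l) * (γ1 ^ (k - l) * σ ^ (l - k)) := by ring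
      _ ≤ K1 * α1 ^ (k - l) * 1 := by
          apply mul_le_mul_of_nonneg_left hprod
          positivity
      _ = K1 * α1 ^ (k - l) := by rw [mul_one]
      _ ≤ max K1 K2 * (max α1 α2) ^ (k - l) := by
          apply mul_le_mul (le_max_left _ _) hαle (by positivity)
          exact le_trans (le_trans one_pos.le hK1) (le_max_left _ _)
  · intro k l hkl
    rw [_root_.one_zpow, mul_one, norm_evolW_mul hσ]
    have hb : ‖evol A k l * (1 - P l)‖ ≤ K2 * α2 ^ (l - k) * γ2 ^ (k - l) :=
      norm_evol_proj' hγ2 h2 hkl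
    have hprod : σ ^ (l - k) * γ2 ^ (k - l) ≤ 1 := by
      have hz : σ ^ (l - k) ≤ γ2 ^ (l - k) := zpow_le_zpow_base hσ hσ2 (by omega)
      have := mul_le_mul_of_nonneg_right hz (zpow_pos hγ2 (k - l)).le
      rwa [← zpow_add₀ hγ2.ne', (by ring : l - k + (k - l) = 0), zpow_zero] at this
    have hαle : α2 ^ (l - k) ≤ (max α1 α2) ^ (l - k) :=
      zpow_le_zpow_base hα20 (le_max_right _ _) (by omega)
    have hinv : (1 / max α1 α2) ^ (k - l) = (max α1 α2) ^ (l - k) := by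
      rw [one_div, _root_.inv_zpow, ← _root_.zpow_neg, neg_sub]
    rw [hinv]
    calc σ ^ (l - k) * ‖evol A k l * (1 - P l)‖
        ≤ σ ^ (l - k) * (K2 * α2 ^ (l - k) * γ2 ^ (k - l)) :=
          mul_le_mul_of_nonneg_left hb (zpow_pos hσ _).le
      _ = K2 * α2 ^ (l - k) * (σ ^ (l - k) * γ2 ^ (k - l)) := by ring
      _ ≤ K2 * α2 ^ (l - k) * 1 := by
          apply mul_le_mul_of_nonneg_left hprod
          positivity
      _ = K2 * α2 ^ (l - k) := by rw [mul_one]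
      _ ≤ max K1 K2 * (max α1 α2) ^ (l - k) := by
          apply mul_le_mul (le_max_right _ _) hαle (by positivity)
          exact le_trans (le_trans one_pos.le hK1) (le_max_left _ _)

/-- Rescaling a NED to a nearby weight, keeping the projector. -/
lemma ned_rescale (hγ : 0 < γ) (h : NEDWith A γ P K α 1)
    (hσl : α * γ < σ) (hσr : σ < γ / α) :
    NEDWith A σ P K (α * max (γ / σ) (σ / γ)) 1 := by
  have hα0 := h.2.2.1
  have hα1 := h.2.2.2.1
  have hK := h.2.1
  have hσ : 0 < σ := lt_trans (by positivity) hσl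
  set α' := α * max (γ / σ) (σ / γ) with hα'
  have hα'0 : 0 < α' := by
    apply mul_pos hα0
    exact lt_max_of_lt_left (div_pos hγ hσ)
  have hα'1 : α' < 1 := by
    rcases max_cases (γ / σ) (σ / γ) with ⟨he, _⟩ | ⟨he, _⟩
    · rw [hα', he, mul_div_assoc']
      rw [div_lt_one hσ]
      exact hσl
    · rw [hα', he, mul_div_assoc']
      rw [div_lt_one hγ]
      calc α * σ < α * (γ / α) := by
            apply mul_lt_mul_of_pos_left hσr hα0
        _ = γ := by field_simp
  refine ⟨h.1, hK, hα'0, hα'1, le_refl 1, ?_, ?_⟩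
  · intro k l hkl
    rw [_root_.one_zpow, mul_one, norm_evolW_mul hσ]
    have hb : ‖evol A k l * P l‖ ≤ K * α ^ (k - l) * γ ^ (k - l) :=
      norm_evol_proj hγ h hkl
    have heq : α ^ (k - l) * γ ^ (k - l) * σ ^ (l - k) = (α * (γ / σ)) ^ (k - l) := by
      have hss : σ ^ (l - k) = (σ ^ (k - l))⁻¹ := by
        rw [← _root_.zpow_neg]; congr 1; ring
      rw [mul_zpow, div_zpow, hss, div_eq_mul_inv]; ring
    have hble : (α * (γ / σ)) ^ (k - l) ≤ α' ^ (k - l) := by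
      apply zpow_le_zpow_base (by positivity) _ (by omega)
      rw [hα']
      apply mul_le_mul_of_nonneg_left (le_max_left _ _) hα0.le
    calc σ ^ (l - k) * ‖evol A k l * P l‖
        ≤ σ ^ (l - k) * (K * α ^ (k - l) * γ ^ (k - l)) :=
          mul_le_mul_of_nonneg_left hb (zpow_pos hσ _).le
      _ = K * (α ^ (k - l) * γ ^ (k - l) * σ ^ (l - k)) := by ring
      _ = K * (α * (γ / σ)) ^ (k - l) := by rw [heq]
      _ ≤ K * α' ^ (k - l) := by
          apply mul_le_mul_of_nonneg_left hble (by linarith)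
  · intro k l hkl
    rw [_root_.one_zpow, mul_one, norm_evolW_mul hσ]
    have hb : ‖evol A k l * (1 - P l)‖ ≤ K * α ^ (l - k) * γ ^ (k - l) :=
      norm_evol_proj' hγ h hkl
    have heq : α ^ (l - k) * γ ^ (k - l) * σ ^ (l - k) = (α * (σ / γ)) ^ (l - k) := by
      have hgg : γ ^ (k - l) = (γ ^ (l - k))⁻¹ := by
        rw [← _root_.zpow_neg]; congr 1; ring
      rw [mul_zpow, div_zpow, hgg, div_eq_mul_inv]; ring
    have hble : (α * (σ / γ)) ^ (l - k) ≤ α' ^ (l - k) := by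
      apply zpow_le_zpow_base (by positivity) _ (by omega)
      rw [hα']
      apply mul_le_mul_of_nonneg_left (le_max_right _ _) hα0.le
    have hinv : (1 / α') ^ (k - l) = α' ^ (l - k) := by
      rw [one_div, _root_.inv_zpow, ← _root_.zpow_neg, neg_sub]
    rw [hinv]
    calc σ ^ (l - k) * ‖evol A k l * (1 - P l)‖
        ≤ σ ^ (l - k) * (K * α ^ (l - k) * γ ^ (k - l)) :=
          mul_le_mul_of_nonneg_left hb (zpow_pos hσ _).le
      _ = K * (α ^ (l - k) * γ ^ (k - l) * σ ^ (l - k)) := by ring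
      _ = K * (α * (σ / γ)) ^ (l - k) := by rw [heq]
      _ ≤ K * α' ^ (l - k) := by
          apply mul_le_mul_of_nonneg_left hble (by linarith)

end Aux5
section Aux6
variable {N : ℕ} {A : ℤ → GL (Fin N) ℝ}

lemma strong_to_one (hN : 0 < N) {σ : ℝ} (h : HasStrongNED A σ) :
    ∃ P K α, NEDWith A σ P K α 1 := by
  obtain ⟨P, K, α, ε, hned, _⟩ := h
  have := eps_eq_one hned hN
  subst this
  exact ⟨P, K, α, hned⟩

/-- Over an interval contained in the resolvent set, the stable and unstable
sets are constant. -/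
lemma gap_const (hN : 0 < N) {σ1 σ2 : ℝ} (hσ1 : 0 < σ1) (hle : σ1 ≤ σ2)
    (hρ : ∀ σ, σ1 ≤ σ → σ ≤ σ2 → HasStrongNED A σ) (l : ℤ) :
    stableSet A σ2 1 l = stableSet A σ1 1 l ∧
      unstableSet A σ2 1 l = unstableSet A σ1 1 l := by
  set T : Set ℝ := {t | t ∈ Set.Icc σ1 σ2 ∧ stableSet A t 1 l = stableSet A σ1 1 l ∧
      unstableSet A t 1 l = unstableSet A σ1 1 l} with hT
  have hmemσ1 : σ1 ∈ T := ⟨⟨le_rfl, hle⟩, rfl, rfl⟩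
  have hne : T.Nonempty := ⟨σ1, hmemσ1⟩
  have hbdd : BddAbove T := ⟨σ2, fun t ht => ht.1.2⟩
  set c := sSup T with hc
  have hc1 : σ1 ≤ c := le_csSup hbdd hmemσ1
  have hc2 : c ≤ σ2 := csSup_le hne (fun t ht => ht.1.2)
  have hc0 : 0 < c := lt_of_lt_of_le hσ1 hc1
  obtain ⟨P, K, α, hned⟩ := strong_to_one hN (hρ c hc1 hc2)
  have hα0 := hned.2.2.1
  have hα1 := hned.2.2.2.1
  have hαc : α * c < c := by nlinarith
  have hcα : c < c / α := by
    rw [lt_div_iff₀ hα0]; nlinarith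
  have key : ∀ σ : ℝ, α * c < σ → σ < c / α →
      stableSet A σ 1 l = stableSet A c 1 l ∧
        unstableSet A σ 1 l = unstableSet A c 1 l := by
    intro σ hl' hr'
    have hσ0 : 0 < σ := lt_trans (by positivity) hl'
    have hnedσ := ned_rescale hc0 hned hl' hr'
    constructor
    · ext ξ
      rw [mem_stableSet_iff hσ0 hnedσ l ξ, mem_stableSet_iff hc0 hned l ξ]
    · ext ξ
      rw [mem_unstableSet_iff hσ0 hnedσ l ξ, mem_unstableSet_iff hc0 hned l ξ]
  obtain ⟨t, htT, hαct⟩ := exists_lt_of_lt_csSup hne hαc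
  have htc : t ≤ c := le_csSup hbdd htT
  have hkt := key t hαct (lt_of_le_of_lt htc hcα)
  have hcT : c ∈ T := by
    refine ⟨⟨hc1, hc2⟩, ?_, ?_⟩
    · rw [← hkt.1, htT.2.1]
    · rw [← hkt.2, htT.2.2]
  have hceq : c = σ2 := by
    by_contra hne2
    have hclt : c < σ2 := lt_of_le_of_ne hc2 hne2
    set u := min σ2 (c / α) with hu
    have hcu : c < u := lt_min hclt hcα
    set σ := (c + u) / 2 with hσdef
    have h1 : c < σ := by rw [hσdef]; linarith
    have h2 : σ < u := by rw [hσdef]; linarith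
    have hσT : σ ∈ T := by
      have hkσ := key σ (lt_trans hαc h1) (lt_of_lt_of_le h2 (min_le_right _ _))
      refine ⟨⟨le_trans hc1 h1.le, le_trans h2.le (min_le_left _ _)⟩, ?_, ?_⟩
      · rw [hkσ.1, hcT.2.1]
      · rw [hkσ.2, hcT.2.2]
    have := le_csSup hbdd hσT
    linarith
  rw [← hceq]
  exact hcT.2

end Aux6
section Choice

def RelIdx (n : ℕ) (lowFull highInf : Bool) (m : ℕ) : Prop :=
  m ≤ n ∧ (m = 0 → lowFull = false) ∧ (m = n → highInf = false)

variable {N n : ℕ} {A : ℤ → GL (Fin N) ℝ} {lowFull highInf : Bool} {a b : ℕ → ℝ}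
  {γ : ℕ → ℝ} {P : ℕ → ℤ → Mat N} {K α ε : ℕ → ℝ}

lemma adm_ned (hadm : AdmissibleChoice A n lowFull highInf a b γ P K α ε) (hn : 1 ≤ n)
    (m : ℕ) (hm : RelIdx n lowFull highInf m) :
    NEDWith A (γ m) (P m) (K m) (α m) (ε m) := by
  by_cases h0 : m = 0
  · subst h0
    exact ((hadm.1 (hm.2.1 rfl)).2.2).1
  · by_cases hn' : m = n
    · subst hn'
      exact ((hadm.2.1 (hm.2.2 rfl)).2.2).1
    · exact (hadm.2.2 m (by omega) (lt_of_le_of_ne hm.1 hn')).2.2.1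

lemma adm_ned1 (hN : 0 < N) (hadm : AdmissibleChoice A n lowFull highInf a b γ P K α ε)
    (hn : 1 ≤ n) (m : ℕ) (hm : RelIdx n lowFull highInf m) :
    NEDWith A (γ m) (P m) (K m) (α m) 1 := by
  have h := adm_ned hadm hn m hm
  have he := eps_eq_one h hN
  rwa [he] at h

lemma adm_strong (hN : 0 < N) (hadm : AdmissibleChoice A n lowFull highInf a b γ P K α ε)
    (hn : 1 ≤ n) (m : ℕ) (hm : RelIdx n lowFull highInf m) :
    HasStrongNED A (γ m) := by
  have h := adm_ned1 hN hadm hn m hm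
  refine ⟨P m, K m, α m, 1, h, ?_⟩
  have := h.2.2.2.1
  nlinarith

lemma adm_gpos (hadm : AdmissibleChoice A n lowFull highInf a b γ P K α ε) (hn : 1 ≤ n)
    (hab : ∀ i, 1 ≤ i → i ≤ n → 0 < a i ∧ a i ≤ b i)
    (m : ℕ) (hm : RelIdx n lowFull highInf m) : 0 < γ m := by
  by_cases h0 : m = 0
  · subst h0; exact (hadm.1 (hm.2.1 rfl)).1
  · by_cases hn' : m = n
    · subst hn'; exact (hadm.2.1 (hm.2.2 rfl)).1
    · have h := (hadm.2.2 m (by omega) (lt_of_le_of_ne hm.1 hn')).1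
      have := hab m (by omega) hm.1
      linarith

lemma ab_chain (hab : ∀ i, 1 ≤ i → i ≤ n → 0 < a i ∧ a i ≤ b i)
    (hsep : ∀ i, 1 ≤ i → i < n → b i < a (i + 1)) :
    ∀ i j, 1 ≤ i → i ≤ j → j ≤ n → a i ≤ a j ∧ b i ≤ b j := by
  intro i j h1 hij hjn
  induction j with
  | zero => omega
  | succ j ih =>
    rcases Nat.lt_or_ge i (j+1) with hlt | hge
    · have hj1 : 1 ≤ j := by omega
      have hij' : i ≤ j := by omega
      have hjn' : j ≤ n := by omega
      have ⟨ha', hb'⟩ := ih hij' hjn'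
      have hsepj := hsep j hj1 (by omega)
      have habj1 := hab (j+1) (by omega) hjn
      have habj := hab j hj1 hjn'
      constructor
      · have := habj.2
        have := habj1.2
        linarith
      · have := habj1.2
        linarith
    · have : i = j + 1 := by omega
      subst this
      exact ⟨le_rfl, le_rfl⟩

lemma mem_Sigma_of_interval
    (hspec : SigmaNED A = ⋃ i ∈ Set.Icc 1 n, specInterval n lowFull highInf a b i)
    (hab : ∀ i, 1 ≤ i → i ≤ n → 0 < a i ∧ a i ≤ b i)
    (i : ℕ) (h1 : 1 ≤ i) (h2 : i ≤ n) :
    a i ∈ SigmaNED A ∧ b i ∈ SigmaNED A := by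
  have habi := hab i h1 h2
  have hmem : ∀ x : ℝ, x ∈ specInterval n lowFull highInf a b i → x ∈ SigmaNED A := by
    intro x hx
    rw [hspec]
    exact Set.mem_biUnion ⟨h1, h2⟩ hx
  constructor
  · apply hmem
    unfold specInterval
    split_ifs with hc1 hc2
    · have : i = 1 := hc1.1
      subst this
      exact Set.mem_Ioc.mpr ⟨habi.1, habi.2⟩
    · have : i = n := hc2.1
      subst this
      exact Set.mem_Ici.mpr le_rfl
    · exact Set.mem_Icc.mpr ⟨le_rfl, habi.2⟩
  · apply hmem
    unfold specInterval
    split_ifs with hc1 hc2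
    · have : i = 1 := hc1.1
      subst this
      exact Set.mem_Ioc.mpr ⟨lt_of_lt_of_le habi.1 habi.2, le_rfl⟩
    · have : i = n := hc2.1
      subst this
      exact Set.mem_Ici.mpr habi.2
    · exact Set.mem_Icc.mpr ⟨habi.2, le_rfl⟩

lemma adm_upper (hN : 0 < N) (hadm : AdmissibleChoice A n lowFull highInf a b γ P K α ε)
    (hn : 1 ≤ n)
    (hspec : SigmaNED A = ⋃ i ∈ Set.Icc 1 n, specInterval n lowFull highInf a b i)
    (hab : ∀ i, 1 ≤ i → i ≤ n → 0 < a i ∧ a i ≤ b i)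
    (m : ℕ) (hm : RelIdx n lowFull highInf m) (hmn : m < n) : γ m < a (m + 1) := by
  by_cases h0 : m = 0
  · subst h0
    obtain ⟨hg0, hsub, hned, hstr⟩ := hadm.1 (hm.2.1 rfl)
    have ha1 := (mem_Sigma_of_interval hspec hab 1 le_rfl hn).1
    rcases lt_trichotomy (γ 0) (a 1) with h | h | h
    · exact h
    · exfalso
      exact ha1.2 (h ▸ ⟨P 0, K 0, α 0, ε 0, hned, hstr⟩)
    · exfalso
      have : a 1 ∈ rhoNED A := hsub ⟨(hab 1 le_rfl hn).1, h⟩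
      exact ha1.2 this.2
  · exact (hadm.2.2 m (by omega) hmn).2.1

lemma adm_lower (hN : 0 < N) (hadm : AdmissibleChoice A n lowFull highInf a b γ P K α ε)
    (hn : 1 ≤ n)
    (hspec : SigmaNED A = ⋃ i ∈ Set.Icc 1 n, specInterval n lowFull highInf a b i)
    (hab : ∀ i, 1 ≤ i → i ≤ n → 0 < a i ∧ a i ≤ b i)
    (m : ℕ) (hm : RelIdx n lowFull highInf m) (h1 : 1 ≤ m) : b m < γ m := by
  by_cases hn' : m = n
  · rw [hn']
    obtain ⟨hg0, hsub, hned, hstr⟩ := hadm.2.1 (hm.2.2 hn')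
    have hbn := (mem_Sigma_of_interval hspec hab n hn le_rfl).2
    rcases lt_trichotomy (b n) (γ n) with h | h | h
    · exact h
    · exfalso
      exact hbn.2 (h ▸ ⟨P n, K n, α n, ε n, hned, hstr⟩)
    · exfalso
      exact hbn.2 (hsub h).2
  · exact (hadm.2.2 m h1 (lt_of_le_of_ne hm.1 hn')).1

lemma adm_gamma_lt (hN : 0 < N) (hadm : AdmissibleChoice A n lowFull highInf a b γ P K α ε)
    (hn : 1 ≤ n)
    (hspec : SigmaNED A = ⋃ i ∈ Set.Icc 1 n, specInterval n lowFull highInf a b i)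
    (hab : ∀ i, 1 ≤ i → i ≤ n → 0 < a i ∧ a i ≤ b i)
    (r s : ℕ) (hr : RelIdx n lowFull highInf r) (hs : RelIdx n lowFull highInf s)
    (hrs : r < s) : γ r < γ s := by
  have step : ∀ m : ℕ, RelIdx n lowFull highInf m → m < n →
      RelIdx n lowFull highInf (m+1) → γ m < γ (m+1) := by
    intro m hm hmn hm1
    have h1 := adm_upper hN hadm hn hspec hab m hm hmn
    have h2 := adm_lower hN hadm hn hspec hab (m+1) hm1 (by omega)
    have h3 := (hab (m+1) (by omega) hm1.1).2
    linarith
  -- induction on s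
  clear hN
  induction s with
  | zero => omega
  | succ s ih =>
    have hs1 : s + 1 ≤ n := hs.1
    have hsRel : RelIdx n lowFull highInf s ∨ s = r := by
      rcases Nat.lt_or_ge r s with h | h
      · left
        exact ⟨by omega, fun hh => absurd hh (by omega), fun hh => absurd hh (by omega)⟩
      · right; omega
    rcases hsRel with hsR | hsr
    · rcases Nat.lt_or_ge r s with h | h
      · have := ih hsR h
        have := step s hsR (by omega) hs
        linarith
      · have : r = s := by omega
        subst this
        exact step r hsR (by omega) hs
    · subst hsr
      exact step s hr (by omega) hs

lemma adm_gamma_le (hN : 0 < N) (hadm : AdmissibleChoice A n lowFull highInf a b γ P K α ε)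
    (hn : 1 ≤ n)
    (hspec : SigmaNED A = ⋃ i ∈ Set.Icc 1 n, specInterval n lowFull highInf a b i)
    (hab : ∀ i, 1 ≤ i → i ≤ n → 0 < a i ∧ a i ≤ b i)
    (r s : ℕ) (hr : RelIdx n lowFull highInf r) (hs : RelIdx n lowFull highInf s)
    (hrs : r ≤ s) : γ r ≤ γ s := by
  rcases Nat.lt_or_ge r s with h | h
  · exact (adm_gamma_lt hN hadm hn hspec hab r s hr hs h).le
  · have : r = s := by omega
    subst this; exact le_rfl

/-- Points strictly between consecutive spectral intervals are not in the spectrum. -/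
lemma not_mem_Sigma (hn : 1 ≤ n)
    (hspec : SigmaNED A = ⋃ i ∈ Set.Icc 1 n, specInterval n lowFull highInf a b i)
    (hab : ∀ i, 1 ≤ i → i ≤ n → 0 < a i ∧ a i ≤ b i)
    (hsep : ∀ i, 1 ≤ i → i < n → b i < a (i + 1))
    (m : ℕ) (hm : RelIdx n lowFull highInf m) (x : ℝ) (hx0 : 0 < x)
    (hxl : 1 ≤ m → b m < x) (hxr : m < n → x < a (m + 1)) :
    x ∉ SigmaNED A := by
  rw [hspec]
  intro hmem
  obtain ⟨j, hj, hxj⟩ := Set.mem_iUnion₂.mp hmem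
  have hmle : m ≤ n := hm.1
  have hj1 : 1 ≤ j := hj.1
  have hj2 : j ≤ n := hj.2
  unfold specInterval at hxj
  split_ifs at hxj with hc1 hc2
  · -- j = 1 and lowFull
    have hm1 : 1 ≤ m := by
      rcases Nat.eq_zero_or_pos m with h0 | h
      · have := hm.2.1 h0
        rw [this] at hc1
        exact absurd hc1.2 (by simp)
      · exact h
    have hxb1 : x ≤ b 1 := hxj.2
    have hb1m : b 1 ≤ b m := (ab_chain hab hsep 1 m le_rfl hm1 hm.1).2
    have := hxl hm1
    linarith
  · -- j = n and highInf
    have hmn : m < n := by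
      rcases Nat.lt_or_ge m n with h | h
      · exact h
      · have hmeq : m = n := by omega
        have := hm.2.2 hmeq
        rw [this] at hc2
        exact absurd hc2.2 (by simp)
    have hxan : a n ≤ x := hxj
    have ham : a (m+1) ≤ a n := (ab_chain hab hsep (m+1) n (by omega) (by omega) le_rfl).1
    have := hxr hmn
    linarith
  · -- Icc case
    rcases le_or_gt j m with h | h
    · have hm1 : 1 ≤ m := by omega
      have hbjm : b j ≤ b m := (ab_chain hab hsep j m hj1 h hm.1).2
      have := hxl hm1
      have := hxj.2
      linarith
    · have hmn : m < n := by omega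
      have ham : a (m+1) ≤ a j := (ab_chain hab hsep (m+1) j (by omega) h hj2).1
      have := hxr hmn
      have := hxj.1
      linarith

end Choice
section Aux8
variable {N : ℕ} {A : ℤ → GL (Fin N) ℝ} {P : ℤ → Mat N} {γ1 γ2 σ K1 K2 α1 α2 : ℝ}

lemma ned_zero_left (hγ2 : 0 < γ2) (h2 : NEDWith A γ2 P K2 α2 1)
    (hP0 : ∀ k, P k = 0) (hσ0 : 0 < σ) (hσ2 : σ ≤ γ2) : NEDWith A σ P K2 α2 1 := by
  have hK2 := h2.2.1
  have hα20 := h2.2.2.1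
  refine ⟨h2.1, hK2, hα20, h2.2.2.2.1, le_rfl, ?_, ?_⟩
  · intro k l hkl
    rw [hP0 l, mul_zero, norm_zero]
    have h1 : (0:ℝ) < α2 ^ (k - l) := zpow_pos hα20 _
    have : (0:ℝ) < K2 := lt_of_lt_of_le one_pos hK2
    rw [_root_.one_zpow, mul_one]
    positivity
  · intro k l hkl
    rw [_root_.one_zpow, mul_one, norm_evolW_mul hσ0]
    have hb : ‖evol A k l * (1 - P l)‖ ≤ K2 * α2 ^ (l - k) * γ2 ^ (k - l) :=
      norm_evol_proj' hγ2 h2 hkl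
    have hprod : σ ^ (l - k) * γ2 ^ (k - l) ≤ 1 := by
      have hz : σ ^ (l - k) ≤ γ2 ^ (l - k) := zpow_le_zpow_base hσ0 hσ2 (by omega)
      have := mul_le_mul_of_nonneg_right hz (zpow_pos hγ2 (k - l)).le
      rwa [← zpow_add₀ hγ2.ne', (by ring : l - k + (k - l) = 0), zpow_zero] at this
    have hinv : (1 / α2) ^ (k - l) = α2 ^ (l - k) := by
      rw [one_div, _root_.inv_zpow, ← _root_.zpow_neg, neg_sub]
    rw [hinv]
    calc σ ^ (l - k) * ‖evol A k l * (1 - P l)‖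
        ≤ σ ^ (l - k) * (K2 * α2 ^ (l - k) * γ2 ^ (k - l)) :=
          mul_le_mul_of_nonneg_left hb (zpow_pos hσ0 _).le
      _ = K2 * α2 ^ (l - k) * (σ ^ (l - k) * γ2 ^ (k - l)) := by ring
      _ ≤ K2 * α2 ^ (l - k) * 1 := by
          apply mul_le_mul_of_nonneg_left hprod
          positivity
      _ = K2 * α2 ^ (l - k) := mul_one _

lemma ned_one_right (hγ1 : 0 < γ1) (h1 : NEDWith A γ1 P K1 α1 1)
    (hP1 : ∀ k, P k = 1) (hσ1 : γ1 ≤ σ) : NEDWith A σ P K1 α1 1 := by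
  have hσ0 : 0 < σ := lt_of_lt_of_le hγ1 hσ1
  have hK1 := h1.2.1
  have hα10 := h1.2.2.1
  refine ⟨h1.1, hK1, hα10, h1.2.2.2.1, le_rfl, ?_, ?_⟩
  · intro k l hkl
    rw [_root_.one_zpow, mul_one, norm_evolW_mul hσ0]
    have hb : ‖evol A k l * P l‖ ≤ K1 * α1 ^ (k - l) * γ1 ^ (k - l) :=
      norm_evol_proj hγ1 h1 hkl
    have hprod : γ1 ^ (k - l) * σ ^ (l - k) ≤ 1 := by
      have hz : γ1 ^ (k - l) ≤ σ ^ (k - l) := zpow_le_zpow_base hγ1 hσ1 (by omega)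
      have := mul_le_mul_of_nonneg_right hz (zpow_pos hσ0 (l - k)).le
      rwa [← zpow_add₀ hσ0.ne', (by ring : k - l + (l - k) = 0), zpow_zero] at this
    calc σ ^ (l - k) * ‖evol A k l * P l‖
        ≤ σ ^ (l - k) * (K1 * α1 ^ (k - l) * γ1 ^ (k - l)) :=
          mul_le_mul_of_nonneg_left hb (zpow_pos hσ0 _).le
      _ = K1 * α1 ^ (k - l) * (γ1 ^ (k - l) * σ ^ (l - k)) := by ring
      _ ≤ K1 * α1 ^ (k - l) * 1 := by
          apply mul_le_mul_of_nonneg_left hprod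
          positivity
      _ = K1 * α1 ^ (k - l) := mul_one _
  · intro k l hkl
    rw [hP1 l, sub_self, mul_zero, norm_zero, _root_.one_zpow, mul_one]
    have h1' : (0:ℝ) < (1/α1) ^ (k - l) := zpow_pos (by positivity) _
    have : (0:ℝ) < K1 := lt_of_lt_of_le one_pos hK1
    positivity

lemma invProj_zero : IsInvariantProjector A (fun _ => (0 : Mat N)) :=
  ⟨fun _ => by simp, fun _ => by simp⟩

lemma invProj_one : IsInvariantProjector A (fun _ => (1 : Mat N)) :=
  ⟨fun _ => by simp, fun _ => by simp⟩

lemma matrix_eq_of_mulVec {M M' : Mat N} (h : ∀ ξ, M *ᵥ ξ = M' *ᵥ ξ) : M = M' := by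
  ext i j
  have := congrFun (h (Pi.single j 1)) i
  simpa [Matrix.mulVec_single] using this

lemma one_le_finrank_of_mem {s : Set (Fin N → ℝ)} {v : Fin N → ℝ}
    (hv : v ∈ s) (hv0 : v ≠ 0) : 1 ≤ Set.finrank ℝ s := by
  have h1 : (1:ℕ) = Module.finrank ℝ (ℝ ∙ v) := (finrank_span_singleton hv0).symm
  rw [Set.finrank, h1]
  apply Submodule.finrank_mono
  rw [Submodule.span_le]
  intro x hx
  rcases hx with rfl
  exact Submodule.subset_span hv

end Aux8
/-- (Spectral theorem, spectral bundles part.) If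
`Σ_NED(A) = I₁ ∪ ⋯ ∪ I_n` with `1 ≤ n ≤ N` spectral intervals, then for every
admissible choice of resolvent points the spectral bundles `W₀, …, W_{n+1}`
satisfy: `dim W_i(l) ≥ 1` for `i = 1, …, n`; `W_i(l) ∩ W_j(l) = {0}` for `i ≠ j`;
`W₀(l) + ⋯ + W_{n+1}(l) = ℝ^N`; and the bundles are independent of the
admissible choice. -/
theorem spectral_theorem_bundles {N : ℕ} (A : ℤ → GL (Fin N) ℝ)
    (n : ℕ) (lowFull highInf : Bool) (a b : ℕ → ℝ)
    (hn : 1 ≤ n) (hnN : n ≤ N)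
    (hone : n = 1 → lowFull = false ∨ highInf = false)
    (hab : ∀ i, 1 ≤ i → i ≤ n → 0 < a i ∧ a i ≤ b i)
    (hsep : ∀ i, 1 ≤ i → i < n → b i < a (i + 1))
    (hspec : SigmaNED A = ⋃ i ∈ Set.Icc 1 n, specInterval n lowFull highInf a b i)
    (γ : ℕ → ℝ) (P : ℕ → ℤ → Mat N) (K α ε : ℕ → ℝ)
    (hadm : AdmissibleChoice A n lowFull highInf a b γ P K α ε) :
    (∀ i, 1 ≤ i → i ≤ n → ∀ l : ℤ,
      1 ≤ Set.finrank ℝ (specBundle A n lowFull highInf γ ε i l)) ∧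
    (∀ i j, i ≤ n + 1 → j ≤ n + 1 → i ≠ j → ∀ l : ℤ,
      specBundle A n lowFull highInf γ ε i l ∩ specBundle A n lowFull highInf γ ε j l
        = {0}) ∧
    (∀ l : ℤ, ∀ ξ : Fin N → ℝ, ∃ w : ℕ → Fin N → ℝ,
      (∀ i, i ≤ n + 1 → w i ∈ specBundle A n lowFull highInf γ ε i l) ∧
      ξ = ∑ i ∈ Finset.range (n + 2), w i) ∧
    (∀ (γ' : ℕ → ℝ) (P' : ℕ → ℤ → Mat N) (K' α' ε' : ℕ → ℝ),
      AdmissibleChoice A n lowFull highInf a b γ' P' K' α' ε' →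
      ∀ i, i ≤ n + 1 → ∀ l : ℤ,
        specBundle A n lowFull highInf γ' ε' i l
          = specBundle A n lowFull highInf γ ε i l) := by
  have hN : 0 < N := by omega
  -- facts about the given admissible choice
  have hned : ∀ m, RelIdx n lowFull highInf m → NEDWith A (γ m) (P m) (K m) (α m) 1 :=
    fun m hm => adm_ned1 hN hadm hn m hm
  have hg : ∀ m, RelIdx n lowFull highInf m → 0 < γ m :=
    fun m hm => adm_gpos hadm hn hab m hm
  have heps : ∀ m, RelIdx n lowFull highInf m → ε m = 1 :=
    fun m hm => eps_eq_one (adm_ned hadm hn m hm) hN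
  have hgle := adm_gamma_le hN hadm hn hspec hab
  have hup := adm_upper hN hadm hn hspec hab
  have hlo := adm_lower hN hadm hn hspec hab
  have hS : ∀ m, RelIdx n lowFull highInf m → ∀ l ξ,
      (ξ ∈ stableSet A (γ m) (ε m) l ↔ P m l *ᵥ ξ = ξ) := by
    intro m hm l ξ
    rw [heps m hm]
    exact mem_stableSet_iff (hg m hm) (hned m hm) l ξ
  have hU : ∀ m, RelIdx n lowFull highInf m → ∀ l ξ,
      (ξ ∈ unstableSet A (γ m) (ε m) l ↔ P m l *ᵥ ξ = 0) := by
    intro m hm l ξ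
    rw [heps m hm]
    exact mem_unstableSet_iff (hg m hm) (hned m hm) l ξ
  have hfixmem : ∀ r s, RelIdx n lowFull highInf r → RelIdx n lowFull highInf s → r ≤ s →
      ∀ l x, P r l *ᵥ x = x → P s l *ᵥ x = x := by
    intro r s hr hs hrs l x hx
    have h1 : x ∈ stableSet A (γ r) 1 l := by
      have := (hS r hr l x).mpr hx
      rw [heps r hr] at *
      exact (mem_stableSet_iff (hg r hr) (hned r hr) l x).mpr hx
    have h2 : x ∈ stableSet A (γ s) 1 l :=
      stableSet_mono (hg r hr) (hgle r s hr hs hrs) l h1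
    exact (mem_stableSet_iff (hg s hs) (hned s hs) l x).mp h2
  have hkermem : ∀ r s, RelIdx n lowFull highInf r → RelIdx n lowFull highInf s → r ≤ s →
      ∀ l x, P s l *ᵥ x = 0 → P r l *ᵥ x = 0 := by
    intro r s hr hs hrs l x hx
    have h1 : x ∈ unstableSet A (γ s) 1 l :=
      (mem_unstableSet_iff (hg s hs) (hned s hs) l x).mpr hx
    have h2 : x ∈ unstableSet A (γ r) 1 l :=
      unstableSet_anti (hg r hr) (hgle r s hr hs hrs) l h1
    exact (mem_unstableSet_iff (hg r hr) (hned r hr) l x).mp h2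
  -- the uniform projector family
  set R : ℕ → ℤ → Mat N := fun m l =>
    if m = 0 ∧ lowFull = true then 0
    else if m = n ∧ highInf = true then 1
    else P m l with hRdef
  have hRel_of : ∀ m, m ≤ n → ¬(m = 0 ∧ lowFull = true) → ¬(m = n ∧ highInf = true) →
      RelIdx n lowFull highInf m := by
    intro m h1 h2 h3
    refine ⟨h1, ?_, ?_⟩
    · intro h0
      by_contra hlf
      exact h2 ⟨h0, by revert hlf; cases lowFull <;> simp⟩
    · intro h0
      by_contra hhi
      exact h3 ⟨h0, by revert hhi; cases highInf <;> simp⟩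
  have hRidem : ∀ m, m ≤ n → ∀ l x, R m l *ᵥ (R m l *ᵥ x) = R m l *ᵥ x := by
    intro m hm l x
    rw [hRdef]
    by_cases h1 : m = 0 ∧ lowFull = true
    · simp [h1]
    · by_cases h2 : m = n ∧ highInf = true
      · have hn0 : ¬(n = 0 ∧ lowFull = true) := fun hc => by omega
        simp [h1, h2, hn0]
      · simp only [h1, h2, if_false]
        rw [Matrix.mulVec_mulVec, (hned m (hRel_of m hm h1 h2)).1.1 l]
  have hRcomm : ∀ r s, r ≤ s → s ≤ n → ∀ l x,
      (R s l *ᵥ (R r l *ᵥ x) = R r l *ᵥ x) ∧ (R r l *ᵥ (R s l *ᵥ x) = R r l *ᵥ x) := by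
    intro r s hrs hsn l x
    by_cases hr0 : r = 0 ∧ lowFull = true
    · have hRr : R r l = 0 := by rw [hRdef]; simp [hr0, show ¬ n = 0 by omega]
      simp [hRr, Matrix.zero_mulVec, Matrix.mulVec_zero]
    · by_cases hsn' : s = n ∧ highInf = true
      · have hs0 : ¬(s = 0 ∧ lowFull = true) := by
          intro hc
          exact hr0 ⟨by omega, hc.2⟩
        have hRs : R s l = 1 := by rw [hRdef]; simp [hs0, hsn', show ¬ n = 0 by omega]
        simp [hRs, Matrix.one_mulVec]
      · -- both plain projectors
        have hrn' : ¬(r = n ∧ highInf = true) := by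
          intro hc
          exact hsn' ⟨by omega, hc.2⟩
        have hs0 : ¬(s = 0 ∧ lowFull = true) := by
          intro hc
          exact hr0 ⟨by omega, hc.2⟩
        have hRr : R r l = P r l := by rw [hRdef]; simp [hr0, hrn']
        have hRs : R s l = P s l := by rw [hRdef]; simp [hs0, hsn']
        have hrRel : RelIdx n lowFull highInf r := hRel_of r (by omega) hr0 hrn'
        have hsRel : RelIdx n lowFull highInf s := hRel_of s hsn hs0 hsn'
        rw [hRr, hRs]
        constructor
        · -- P s fixes the range of P r
          apply hfixmem r s hrRel hsRel hrs l
          rw [Matrix.mulVec_mulVec, (hned r hrRel).1.1 l]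
        · -- P r kills (1 - P s)
          have hker : P r l *ᵥ (x - P s l *ᵥ x) = 0 := by
            apply hkermem r s hrRel hsRel hrs l
            rw [Matrix.mulVec_sub, Matrix.mulVec_mulVec, (hned s hsRel).1.1 l, sub_self]
          have := Matrix.mulVec_sub (P r l) x (P s l *ᵥ x)
          rw [hker] at this
          -- this : 0 = P r l *ᵥ x - P r l *ᵥ (P s l *ᵥ x)
          have h2 : P r l *ᵥ x - P r l *ᵥ (P s l *ᵥ x) = 0 := this.symm
          have h3 := sub_eq_zero.mp h2
          exact h3.symm
  -- bundle characterizations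
  have hbund0 : ∀ l, specBundle A n lowFull highInf γ ε 0 l = {x | R 0 l *ᵥ x = x} := by
    intro l
    have h0 : specBundle A n lowFull highInf γ ε 0 l =
        (if lowFull then {0} else stableSet A (γ 0) (ε 0) l) := by
      simp [specBundle]
    rw [h0]
    by_cases hlf : lowFull = true
    · have hR0 : R 0 l = 0 := by rw [hRdef]; simp [hlf, show ¬ n = 0 by omega]
      rw [if_pos hlf]
      ext x
      simp [hR0, Matrix.zero_mulVec, eq_comm]
    · have hn0 : ¬(0 = n ∧ highInf = true) := fun hc => by omega
      have hR0 : R 0 l = P 0 l := by rw [hRdef]; simp [hlf, hn0]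
      have h0Rel : RelIdx n lowFull highInf 0 := hRel_of 0 (by omega) (by simp [hlf]) hn0
      rw [if_neg hlf]
      ext x
      rw [hS 0 h0Rel l x, hR0]
      rfl
  have hbundn1 : ∀ l, specBundle A n lowFull highInf γ ε (n+1) l = {x | R n l *ᵥ x = 0} := by
    intro l
    have h0 : specBundle A n lowFull highInf γ ε (n+1) l =
        (if highInf then {0} else unstableSet A (γ n) (ε n) l) := by
      have : ¬(n + 1 = 0) := by omega
      simp [specBundle, this]
    rw [h0]
    have hn0 : ¬(n = 0 ∧ lowFull = true) := fun hc => by omega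
    by_cases hhi : highInf = true
    · have hRn : R n l = 1 := by rw [hRdef]; simp [hn0, hhi]
      rw [if_pos hhi]
      ext x
      simp [hRn, Matrix.one_mulVec]
    · have hRn : R n l = P n l := by rw [hRdef]; simp [hn0, hhi]
      have hnRel : RelIdx n lowFull highInf n := hRel_of n le_rfl hn0 (by simp [hhi])
      rw [if_neg hhi]
      ext x
      rw [hU n hnRel l x, hRn]
      rfl
  have hbundmid : ∀ i, 1 ≤ i → i ≤ n → ∀ l,
      specBundle A n lowFull highInf γ ε i l =
        {x | R (i-1) l *ᵥ x = 0} ∩ {x | R i l *ᵥ x = x} := by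
    intro i hi1 hin l
    have h0 : specBundle A n lowFull highInf γ ε i l =
        (if i = 1 ∧ lowFull then Set.univ else unstableSet A (γ (i-1)) (ε (i-1)) l) ∩
        (if i = n ∧ highInf then Set.univ else stableSet A (γ i) (ε i) l) := by
      have h1 : ¬(i = 0) := by omega
      have h2 : ¬(i = n + 1) := by omega
      simp [specBundle, h1, h2]
    rw [h0]
    have hUeq : (if i = 1 ∧ lowFull then Set.univ
        else unstableSet A (γ (i-1)) (ε (i-1)) l) = {x | R (i-1) l *ᵥ x = 0} := by
      by_cases hc : i = 1 ∧ lowFull = true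
      · have hRi : R (i-1) l = 0 := by
          rw [hRdef]; simp [show i - 1 = 0 by omega, hc.2, show ¬ n = 0 by omega]
        rw [if_pos hc]
        ext x
        simp [hRi, Matrix.zero_mulVec]
      · have h1' : ¬(i - 1 = 0 ∧ lowFull = true) := by
          intro hcc
          exact hc ⟨by omega, hcc.2⟩
        have h2' : ¬(i - 1 = n ∧ highInf = true) := by
          intro hcc
          omega
        have hRi : R (i-1) l = P (i-1) l := by rw [hRdef]; simp [h1', h2']
        have hRel : RelIdx n lowFull highInf (i-1) := hRel_of (i-1) (by omega) h1' h2'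
        rw [if_neg hc]
        ext x
        rw [hU (i-1) hRel l x, hRi]
        rfl
    have hSeq : (if i = n ∧ highInf then Set.univ
        else stableSet A (γ i) (ε i) l) = {x | R i l *ᵥ x = x} := by
      by_cases hc : i = n ∧ highInf = true
      · have h1' : ¬(i = 0 ∧ lowFull = true) := by
          intro hcc
          omega
        have hRi : R i l = 1 := by rw [hRdef]; simp [h1', hc, show ¬ n = 0 by omega]
        rw [if_pos hc]
        ext x
        simp [hRi, Matrix.one_mulVec]
      · have h1' : ¬(i = 0 ∧ lowFull = true) := by
          intro hcc
          omega
        have hRi : R i l = P i l := by rw [hRdef]; simp [h1', hc]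
        have hRel : RelIdx n lowFull highInf i := hRel_of i hin h1' hc
        rw [if_neg hc]
        ext x
        rw [hS i hRel l x, hRi]
        rfl
    rw [hUeq, hSeq]
  -- key: consecutive projectors differ
  have haSig : ∀ i, 1 ≤ i → i ≤ n → a i ∈ SigmaNED A ∧ b i ∈ SigmaNED A :=
    fun i h1 h2 => mem_Sigma_of_interval hspec hab i h1 h2
  have hkey : ∀ i, 1 ≤ i → i ≤ n → ∀ l, ∃ x, R i l *ᵥ x ≠ R (i-1) l *ᵥ x := by
    intro i hi1 hin l
    by_contra hcon
    push_neg at hcon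
    have heqM : R i l = R (i-1) l := matrix_eq_of_mulVec hcon
    by_cases hcl : i = 1 ∧ lowFull = true
    · by_cases hch : i = n ∧ highInf = true
      · rcases hone (by omega) with h | h
        · rw [hcl.2] at h; exact absurd h (by simp)
        · rw [hch.2] at h; exact absurd h (by simp)
      · -- P i ≡ 0, contradiction at b i
        have hi0 : ¬(i = 0 ∧ lowFull = true) := fun hc => by omega
        have hiRel : RelIdx n lowFull highInf i := hRel_of i hin hi0 hch
        have hRi : R i l = P i l := by rw [hRdef]; simp [hi0, hch]
        have hRi1 : R (i-1) l = 0 := by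
          rw [hRdef]; simp [show i - 1 = 0 by omega, hcl.2, show ¬ n = 0 by omega]
        have hP0 : ∀ k, P i k = 0 := by
          have := proj_eq_everywhere (hned i hiRel).1 invProj_zero l
            (by rw [← hRi, heqM, hRi1])
          exact this
        have habi := hab i hi1 hin
        have hstrong : HasStrongNED A (b i) := by
          refine ⟨P i, K i, α i, 1, ned_zero_left (hg i hiRel) (hned i hiRel) hP0
            (by linarith [habi.1, habi.2]) (hlo i hiRel hi1).le, ?_⟩
          have := (hned i hiRel).2.2.2.1
          nlinarith
        exact (haSig i hi1 hin).2.2 hstrong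
    · by_cases hch : i = n ∧ highInf = true
      · -- P (i-1) ≡ 1, contradiction at a i
        have h1' : ¬(i - 1 = 0 ∧ lowFull = true) := by
          intro hcc
          exact hcl ⟨by omega, hcc.2⟩
        have h2' : ¬(i - 1 = n ∧ highInf = true) := fun hcc => by omega
        have hRel1 : RelIdx n lowFull highInf (i-1) := hRel_of (i-1) (by omega) h1' h2'
        have hRi1 : R (i-1) l = P (i-1) l := by rw [hRdef]; simp [h1', h2']
        have hRi : R i l = 1 := by
          rw [hRdef]; simp [show ¬(i = 0 ∧ lowFull = true) from fun hc => by omega, hch,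
            show ¬ n = 0 by omega]
        have hP1 : ∀ k, P (i-1) k = 1 := by
          have := proj_eq_everywhere (hned (i-1) hRel1).1 invProj_one l
            (by rw [← hRi1, ← heqM, hRi])
          exact this
        have hupi := hup (i-1) hRel1 (by omega)
        rw [show i - 1 + 1 = i by omega] at hupi
        have hstrong : HasStrongNED A (a i) := by
          refine ⟨P (i-1), K (i-1), α (i-1), 1,
            ned_one_right (hg (i-1) hRel1) (hned (i-1) hRel1) hP1 hupi.le, ?_⟩
          have := (hned (i-1) hRel1).2.2.2.1
          nlinarith
        exact (haSig i hi1 hin).1.2 hstrong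
      · -- both plain, contradiction at a i
        have h1' : ¬(i - 1 = 0 ∧ lowFull = true) := by
          intro hcc
          exact hcl ⟨by omega, hcc.2⟩
        have h2' : ¬(i - 1 = n ∧ highInf = true) := fun hcc => by omega
        have hi0 : ¬(i = 0 ∧ lowFull = true) := fun hc => by omega
        have hRel1 : RelIdx n lowFull highInf (i-1) := hRel_of (i-1) (by omega) h1' h2'
        have hReli : RelIdx n lowFull highInf i := hRel_of i hin hi0 hch
        have hRi1 : R (i-1) l = P (i-1) l := by rw [hRdef]; simp [h1', h2']
        have hRi : R i l = P i l := by rw [hRdef]; simp [hi0, hch]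
        have hPP : ∀ k, P i k = P (i-1) k :=
          proj_eq_everywhere (hned i hReli).1 (hned (i-1) hRel1).1 l
            (by rw [← hRi, ← hRi1, heqM])
        have h2'' : NEDWith A (γ i) (P (i-1)) (K i) (α i) 1 := by
          have h2 := hned i hReli
          rwa [show P i = P (i-1) from funext hPP] at h2
        have hupi := hup (i-1) hRel1 (by omega)
        rw [show i - 1 + 1 = i by omega] at hupi
        have habi := hab i hi1 hin
        have hloi := hlo i hReli hi1
        have hcomb := ned_combine (hg (i-1) hRel1) (hned (i-1) hRel1) h2''
          hupi.le (by linarith)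
        have hstrong : HasStrongNED A (a i) := by
          refine ⟨P (i-1), max (K (i-1)) (K i), max (α (i-1)) (α i), 1, hcomb, ?_⟩
          have := hcomb.2.2.2.1
          nlinarith
        exact (haSig i hi1 hin).1.2 hstrong
  -- membership of 0 in every bundle
  have hzmem : ∀ j, j ≤ n+1 → ∀ l,
      (0 : Fin N → ℝ) ∈ specBundle A n lowFull highInf γ ε j l := by
    intro j hj l
    rcases Nat.eq_zero_or_pos j with h0 | h1
    · subst h0
      rw [hbund0 l]
      simp [Matrix.mulVec_zero]
    · rcases Nat.lt_or_ge j (n+1) with hlt | hge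
      · rw [hbundmid j h1 (by omega) l]
        constructor <;> simp [Matrix.mulVec_zero]
      · have : j = n + 1 := by omega
        subst this
        rw [hbundn1 l]
        simp [Matrix.mulVec_zero]
  refine ⟨?_, ?_, ?_, ?_⟩
  · -- dimension at least one
    intro i hi1 hin l
    obtain ⟨x, hx⟩ := hkey i hi1 hin l
    set w := R i l *ᵥ x - R (i-1) l *ᵥ x with hw
    have hw0 : w ≠ 0 := sub_ne_zero.mpr hx
    have hm1 : R (i-1) l *ᵥ w = 0 := by
      rw [hw, Matrix.mulVec_sub, (hRcomm (i-1) i (by omega) hin l x).2,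
        hRidem (i-1) (by omega) l x, sub_self]
    have hm2 : R i l *ᵥ w = w := by
      rw [hw, Matrix.mulVec_sub, (hRcomm (i-1) i (by omega) hin l x).1,
        hRidem i hin l x]
    have hmem : w ∈ specBundle A n lowFull highInf γ ε i l := by
      rw [hbundmid i hi1 hin l]
      exact ⟨hm1, hm2⟩
    exact one_le_finrank_of_mem hmem hw0
  · -- pairwise trivial intersections
    have hkeydisj : ∀ i j, i < j → j ≤ n+1 → ∀ l (x : Fin N → ℝ),
        x ∈ specBundle A n lowFull highInf γ ε i l →
        x ∈ specBundle A n lowFull highInf γ ε j l → x = 0 := by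
      intro i j hij hj l x hxi hxj
      have hfix : R i l *ᵥ x = x := by
        rcases Nat.eq_zero_or_pos i with h0 | h1
        · subst h0
          rw [hbund0 l] at hxi
          exact hxi
        · rw [hbundmid i h1 (by omega) l] at hxi
          exact hxi.2
      have hker : R (j-1) l *ᵥ x = 0 := by
        rcases Nat.lt_or_ge j (n+1) with hlt | hge
        · rw [hbundmid j (by omega) (by omega) l] at hxj
          exact hxj.1
        · have hjeq : j = n + 1 := by omega
          subst hjeq
          rw [hbundn1 l] at hxj
          rw [show n + 1 - 1 = n by omega]
          exact hxj
      have hcm := (hRcomm i (j-1) (by omega) (by omega) l x).2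
      rw [hker, Matrix.mulVec_zero] at hcm
      rw [← hfix, ← hcm]
    intro i j hi hj hij l
    apply Set.eq_singleton_iff_unique_mem.mpr
    refine ⟨⟨hzmem i hi l, hzmem j hj l⟩, ?_⟩
    intro x hx
    rcases Nat.lt_or_ge i j with h | h
    · exact hkeydisj i j h hj l x hx.1 hx.2
    · have h' : j < i := by omega
      exact hkeydisj j i h' hi l x hx.2 hx.1
  · -- spanning
    intro l ξ
    set w : ℕ → Fin N → ℝ := fun i =>
      if i = 0 then R 0 l *ᵥ ξ
      else if i ≤ n then R i l *ᵥ ξ - R (i-1) l *ᵥ ξ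
      else if i = n + 1 then ξ - R n l *ᵥ ξ
      else 0 with hwdef
    refine ⟨w, ?_, ?_⟩
    · intro i hi
      rcases Nat.eq_zero_or_pos i with h0 | h1
      · subst h0
        have hw0 : w 0 = R 0 l *ᵥ ξ := by simp [hwdef]
        rw [hw0, hbund0 l]
        exact hRidem 0 (by omega) l ξ
      · rcases Nat.lt_or_ge i (n+1) with hlt | hge
        · have hwi : w i = R i l *ᵥ ξ - R (i-1) l *ᵥ ξ := by
            rw [hwdef]
            simp [show ¬ i = 0 by omega, show i ≤ n by omega]
          rw [hwi, hbundmid i h1 (by omega) l]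
          constructor
          · show R (i-1) l *ᵥ _ = 0
            rw [Matrix.mulVec_sub, (hRcomm (i-1) i (by omega) (by omega) l ξ).2,
              hRidem (i-1) (by omega) l ξ, sub_self]
          · show R i l *ᵥ _ = _
            rw [Matrix.mulVec_sub, (hRcomm (i-1) i (by omega) (by omega) l ξ).1,
              hRidem i (by omega) l ξ]
        · have hieq : i = n + 1 := by omega
          subst hieq
          have hwi : w (n+1) = ξ - R n l *ᵥ ξ := by
            rw [hwdef]
            simp [show ¬ n + 1 = 0 by omega, show ¬ n + 1 ≤ n by omega]
          rw [hwi, hbundn1 l]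
          show R n l *ᵥ _ = 0
          rw [Matrix.mulVec_sub, hRidem n le_rfl l ξ, sub_self]
    · have hpart : ∀ m, m ≤ n → ∑ i ∈ Finset.range (m+1), w i = R m l *ᵥ ξ := by
        intro m
        induction m with
        | zero =>
          intro _
          rw [Finset.sum_range_one]
          simp [hwdef]
        | succ m ih =>
          intro hm
          rw [Finset.sum_range_succ, ih (by omega)]
          have hwm : w (m+1) = R (m+1) l *ᵥ ξ - R m l *ᵥ ξ := by
            rw [hwdef]
            simp [show ¬ m + 1 = 0 by omega, show m + 1 ≤ n from hm]
          rw [hwm]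
          abel
      rw [Finset.sum_range_succ, hpart n le_rfl]
      have hwn1 : w (n+1) = ξ - R n l *ᵥ ξ := by
        rw [hwdef]
        simp [show ¬ n + 1 = 0 by omega, show ¬ n + 1 ≤ n by omega]
      rw [hwn1]
      abel
  · -- independence of the admissible choice
    intro γ' P' K' α' ε' hadm' i hi l
    have hg' : ∀ m, RelIdx n lowFull highInf m → 0 < γ' m :=
      fun m hm => adm_gpos hadm' hn hab m hm
    have heps' : ∀ m, RelIdx n lowFull highInf m → ε' m = 1 :=
      fun m hm => eps_eq_one (adm_ned hadm' hn m hm) hN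
    have hSeq' : ∀ m, RelIdx n lowFull highInf m →
        stableSet A (γ' m) 1 l = stableSet A (γ m) 1 l ∧
          unstableSet A (γ' m) 1 l = unstableSet A (γ m) 1 l := by
      intro m hm
      have hgm := hg m hm
      have hgm' := hg' m hm
      have hb' : 1 ≤ m → b m < min (γ m) (γ' m) := fun h1 =>
        lt_min (hlo m hm h1) (adm_lower hN hadm' hn hspec hab m hm h1)
      have ha' : m < n → max (γ m) (γ' m) < a (m+1) := fun h1 =>
        max_lt (hup m hm h1) (adm_upper hN hadm' hn hspec hab m hm h1)
      have hρ : ∀ σ, min (γ m) (γ' m) ≤ σ → σ ≤ max (γ m) (γ' m) → HasStrongNED A σ := by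
        intro σ hσ1 hσ2
        have hσ0 : 0 < σ := lt_of_lt_of_le (lt_min hgm hgm') hσ1
        have hnot := not_mem_Sigma hn hspec hab hsep m hm σ hσ0
          (fun h1 => lt_of_lt_of_le (hb' h1) hσ1)
          (fun h1 => lt_of_le_of_lt hσ2 (ha' h1))
        by_contra hns
        exact hnot ⟨hσ0, hns⟩
      rcases le_total (γ m) (γ' m) with hle | hle
      · have hρ2 : ∀ σ, γ m ≤ σ → σ ≤ γ' m → HasStrongNED A σ := by
          intro σ h1 h2
          exact hρ σ (le_trans (min_le_left _ _) h1) (le_trans h2 (le_max_right _ _))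
        exact gap_const hN hgm hle hρ2 l
      · have hρ2 : ∀ σ, γ' m ≤ σ → σ ≤ γ m → HasStrongNED A σ := by
          intro σ h1 h2
          exact hρ σ (le_trans (min_le_right _ _) h1) (le_trans h2 (le_max_left _ _))
        have := gap_const hN hgm' hle hρ2 l
        exact ⟨this.1.symm, this.2.symm⟩
    have hSfull : ∀ m, RelIdx n lowFull highInf m →
        stableSet A (γ' m) (ε' m) l = stableSet A (γ m) (ε m) l := by
      intro m hm
      rw [heps' m hm, heps m hm]
      exact (hSeq' m hm).1
    have hUfull : ∀ m, RelIdx n lowFull highInf m →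
        unstableSet A (γ' m) (ε' m) l = unstableSet A (γ m) (ε m) l := by
      intro m hm
      rw [heps' m hm, heps m hm]
      exact (hSeq' m hm).2
    rcases Nat.eq_zero_or_pos i with h0 | h1
    · subst h0
      have he : ∀ (g e : ℕ → ℝ), specBundle A n lowFull highInf g e 0 l =
          (if lowFull then {0} else stableSet A (g 0) (e 0) l) := by
        intro g e
        simp [specBundle]
      rw [he, he]
      by_cases hlf : lowFull = true
      · rw [if_pos hlf, if_pos hlf]
      · have h0Rel : RelIdx n lowFull highInf 0 :=
          hRel_of 0 (by omega) (by simp [hlf]) (fun hc => by omega)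
        rw [if_neg hlf, if_neg hlf, hSfull 0 h0Rel]
    · rcases Nat.lt_or_ge i (n+1) with hlt | hge
      · have hi1 : 1 ≤ i := h1
        have hin : i ≤ n := by omega
        have he : ∀ (g e : ℕ → ℝ), specBundle A n lowFull highInf g e i l =
            (if i = 1 ∧ lowFull then Set.univ else unstableSet A (g (i-1)) (e (i-1)) l) ∩
            (if i = n ∧ highInf then Set.univ else stableSet A (g i) (e i) l) := by
          intro g e
          simp [specBundle, show ¬(i = 0) by omega, show ¬(i = n + 1) by omega]
        rw [he, he]
        have hUpart : (if i = 1 ∧ lowFull then Set.univ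
            else unstableSet A (γ' (i-1)) (ε' (i-1)) l) =
            (if i = 1 ∧ lowFull then Set.univ
            else unstableSet A (γ (i-1)) (ε (i-1)) l) := by
          by_cases hc : i = 1 ∧ lowFull = true
          · rw [if_pos hc, if_pos hc]
          · have h1' : ¬(i - 1 = 0 ∧ lowFull = true) := by
              intro hcc
              exact hc ⟨by omega, hcc.2⟩
            have h2' : ¬(i - 1 = n ∧ highInf = true) := fun hcc => by omega
            have hRel : RelIdx n lowFull highInf (i-1) := hRel_of (i-1) (by omega) h1' h2'
            rw [if_neg hc, if_neg hc, hUfull (i-1) hRel]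
        have hSpart : (if i = n ∧ highInf then Set.univ
            else stableSet A (γ' i) (ε' i) l) =
            (if i = n ∧ highInf then Set.univ
            else stableSet A (γ i) (ε i) l) := by
          by_cases hc : i = n ∧ highInf = true
          · rw [if_pos hc, if_pos hc]
          · have h1' : ¬(i = 0 ∧ lowFull = true) := fun hcc => by omega
            have hRel : RelIdx n lowFull highInf i := hRel_of i hin h1' hc
            rw [if_neg hc, if_neg hc, hSfull i hRel]
        rw [hUpart, hSpart]
      · have hieq : i = n + 1 := by omega
        subst hieq
        have he : ∀ (g e : ℕ → ℝ), specBundle A n lowFull highInf g e (n+1) l =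
            (if highInf then {0} else unstableSet A (g n) (e n) l) := by
          intro g e
          simp [specBundle, show ¬(n + 1 = 0) by omega]
        rw [he, he]
        by_cases hhi : highInf = true
        · rw [if_pos hhi, if_pos hhi]
        · have hnRel : RelIdx n lowFull highInf n :=
            hRel_of n le_rfl (fun hc => by omega) (by simp [hhi])
          rw [if_neg hhi, if_neg hhi, hUfull n hnRel]
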